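/- arXiv:1111.5484 — 4 statements merged into one kernel-verified Lean document; each statement's English description precedes it below -/
import Mathlib

section
/- Let k ≥ 3 and 1 ≤ m ≤ k−2 be integers, and define γ₁(k,m) = (k−m)·ln 2 + √((k−m)²(ln 2)² + 2(k−m)(2^k − 2^{k−m})·ln 2). Then for every integer n with 2^k − 2^{k−m} + γ₁(k,m) ≤ n ≤ 2^k − 2^{k−m} + 2^{k−m−2}, the code S_{n,k} is ugly (not satisfactory). -/
open Finset

/-- The value of column `j` (0-indexed) of the matrix
`H_k = [H_k^(k-1) | H_k^(k-2) | … | H_k^(0)]`, read as a `k`-bit integer with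
row 1 as the most significant bit.  (Column `c` of the block `H_k^(m)` is the
vector `(0,…,0,1,binary_m(c))`, i.e. the integer `2^m + c`; the block `H_k^(m)`
occupies global columns `[2^k - 2^(m+1), 2^k - 2^m)`, so that
`m = ⌊log₂ (2^k - 1 - j)⌋` and the value is `3·2^m + j - 2^k`.) -/
def colVal (k j : ℕ) : ℕ := 3 * 2 ^ Nat.log2 (2 ^ k - 1 - j) + j - 2 ^ k

/-- Row `i` (1-indexed, `1 ≤ i ≤ k`) of the matrix `H_k(n)` consisting of the
first `n` columns of `H_k`. -/
def Hrow (k n : ℕ) (i : ℕ) : Fin n → ZMod 2 :=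
  fun j => if Nat.testBit (colVal k j) (k - i) then 1 else 0

/-- The code `S_{n,k}`: the binary linear code spanned by the rows of `H_k(n)`. -/
def SCode (k n : ℕ) : Submodule (ZMod 2) (Fin n → ZMod 2) :=
  Submodule.span (ZMod 2) (Set.range fun i : Fin k => Hrow k n ((i : ℕ) + 1))

/-- `w_i`: the Hamming weight of the `i`-th (1-indexed) row of `H_k(n)`. -/
def rowWt (k n i : ℕ) : ℕ := hammingNorm (Hrow k n i)

/-- `α_i`: the `i`-th entry (1-indexed) of the last (`n`-th) column of `H_k(n)`;
`true` encodes `1` and `false` encodes `0`. -/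
def alphaBit (k n i : ℕ) : Bool := Nat.testBit (colVal k (n - 1)) (k - i)

/-- Row `i` (1-indexed) of the matrix `M_{n,k}`, whose `j`-th column
(0-indexed) is the `k`-bit binary representation of `2^k - 1 - j`, MSB first. -/
def Mrow (k n : ℕ) (i : ℕ) : Fin n → ZMod 2 :=
  fun j => if Nat.testBit (2 ^ k - 1 - (j : ℕ)) (k - i) then 1 else 0

/-- The code `D_{n,k}`: the binary linear code spanned by the rows of `M_{n,k}`. -/
def DCode (k n : ℕ) : Submodule (ZMod 2) (Fin n → ZMod 2) :=
  Submodule.span (ZMod 2) (Set.range fun i : Fin k => Mrow k n ((i : ℕ) + 1))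

/-- The value of column `j` (0-indexed) of the generalized matrix consisting of
`t-1` copies of `H_k^(k-1)` followed by `H_k(n')`, where `n = 2^(k-1)·(t-1) + n'`
with `2^(k-1) ≤ n' ≤ 2^k - 1` (so `t - 1 = (n - 2^(k-1)) / 2^(k-1)`). -/
def gcolVal (k n j : ℕ) : ℕ :=
  if j < (n - 2 ^ (k - 1)) / 2 ^ (k - 1) * 2 ^ (k - 1) then
    2 ^ (k - 1) + j % 2 ^ (k - 1)
  else colVal k (j - (n - 2 ^ (k - 1)) / 2 ^ (k - 1) * 2 ^ (k - 1))

/-- The generalized code `S_{n,k}`, defined for every `n ≥ 2^(k-1)`: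
the span of the rows of the `k × n` matrix obtained by concatenating `t-1`
copies of `H_k^(k-1)` followed by `H_k(n')`. -/
def GSCode (k n : ℕ) : Submodule (ZMod 2) (Fin n → ZMod 2) :=
  Submodule.span (ZMod 2)
    (Set.range fun i : Fin k => fun j : Fin n =>
      if Nat.testBit (gcolVal k n (j : ℕ)) (k - ((i : ℕ) + 1)) then (1 : ZMod 2) else 0)

/-- The minimum distance of a binary linear code: the least Hamming weight of a
nonzero codeword. -/
noncomputable def minDist {n : ℕ} (C : Submodule (ZMod 2) (Fin n → ZMod 2)) : ℕ :=
  sInf {w | ∃ c ∈ C, c ≠ 0 ∧ hammingNorm c = w}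

/-- `A_w`: the number of codewords of `C` of Hamming weight `w`. -/
noncomputable def numWt {n : ℕ} (C : Submodule (ZMod 2) (Fin n → ZMod 2)) (w : ℕ) : ℕ :=
  Set.ncard {c : Fin n → ZMod 2 | c ∈ C ∧ hammingNorm c = w}

/-- The undetected error probability
`P_ue(C,p) = Σ_{w=1}^n A_w p^w (1-p)^(n-w)`. -/
noncomputable def Pue {n : ℕ} (C : Submodule (ZMod 2) (Fin n → ZMod 2)) (p : ℝ) : ℝ :=
  ∑ w ∈ Finset.Icc 1 n, (numWt C w : ℝ) * p ^ w * (1 - p) ^ (n - w)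

/-- A code is proper if `p ↦ P_ue(C,p)` is monotonically increasing on `[0, 1/2]`. -/
def IsProper {n : ℕ} (C : Submodule (ZMod 2) (Fin n → ZMod 2)) : Prop :=
  MonotoneOn (Pue C) (Set.Icc (0 : ℝ) (1 / 2))

/-- An `[n,k]` code is satisfactory if `P_ue(C,p) ≤ 2^(k-n)` for all `p ∈ [0,1/2]`. -/
def IsSatisfactory (k : ℕ) {n : ℕ} (C : Submodule (ZMod 2) (Fin n → ZMod 2)) : Prop :=
  ∀ p ∈ Set.Icc (0 : ℝ) (1 / 2), Pue C p ≤ (2 : ℝ) ^ ((k : ℤ) - (n : ℤ))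

/-- The binary entropy function `h(x) = -x log₂ x - (1-x) log₂ (1-x)`. -/
noncomputable def binEnt (x : ℝ) : ℝ :=
  -(x * Real.logb 2 x) - (1 - x) * Real.logb 2 (1 - x)

/-- `U_m = (2^(m+2) - 3)·(1 - h((2^(m+1) - 2)/(2^(m+2) - 3)))`. -/
noncomputable def Ufun (m : ℕ) : ℝ :=
  ((2 : ℝ) ^ (m + 2) - 3) * (1 - binEnt (((2 : ℝ) ^ (m + 1) - 2) / ((2 : ℝ) ^ (m + 2) - 3)))





def parV (K v : ℕ) : ZMod 2 := ∑ i ∈ Finset.range K, (if v.testBit i then 1 else 0)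

def cw (k n mask : ℕ) : Fin n → ZMod 2 := fun j => parV k (colVal k (j : ℕ) &&& mask)


lemma cw_mem (k n mask : ℕ) : cw k n mask ∈ SCode k n := by
  have hrepr : cw k n mask =
      ∑ i : Fin k, (if mask.testBit (k - 1 - (i : ℕ)) then (1 : ZMod 2) else 0) •
        Hrow k n ((i : ℕ) + 1) := by
    funext j
    rw [Finset.sum_apply]
    show parV k (colVal k (j : ℕ) &&& mask) = _
    unfold parV
    rw [Finset.sum_range]
    refine Fintype.sum_equiv Fin.revPerm _ _ fun x => ?_
    have hrev : ((Fin.revPerm x : Fin k) : ℕ) = k - 1 - (x : ℕ) := by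
      simp [Fin.revPerm, Fin.val_rev]; omega
    have hx : (x : ℕ) < k := x.isLt
    have hidx : k - (k - 1 - (x : ℕ) + 1) = (x : ℕ) := by omega
    have hidx2 : k - 1 - (k - 1 - (x : ℕ)) = (x : ℕ) := by omega
    simp only [Pi.smul_apply, Hrow, hrev, hidx, smul_eq_mul, Nat.testBit_and]
    cases h1 : (colVal k (j : ℕ)).testBit (x : ℕ) <;>
      cases h2 : mask.testBit (x : ℕ) <;> simp [h1, h2, hidx2]
  rw [hrepr]
  exact Submodule.sum_mem _ fun i _ =>
    Submodule.smul_mem _ _ (Submodule.subset_span ⟨i, rfl⟩)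


lemma parV_xor (K x y : ℕ) : parV K (x ^^^ y) = parV K x + parV K y := by
  unfold parV
  rw [← Finset.sum_add_distrib]
  refine Finset.sum_congr rfl fun i _ => ?_
  rw [Nat.testBit_xor]
  cases hx : x.testBit i <;> cases hy : y.testBit i <;> simp <;> decide

lemma parV_two_pow {K b : ℕ} (hb : b < K) : parV K (2 ^ b) = 1 := by
  unfold parV
  rw [Finset.sum_eq_single b]
  · simp [Nat.testBit_two_pow]
  · intro i _ hi
    simp [Nat.testBit_two_pow, Ne.symm hi]
  · intro h; exact absurd (Finset.mem_range.mpr hb) h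

lemma parV_zero (K : ℕ) : parV K 0 = 0 := by
  unfold parV; simp


-- L1: evaluation on a block
lemma colVal_block {k t c : ℕ} (htk : t < k) (hc : c < 2 ^ t) :
    colVal k (2 ^ k - 2 ^ (t + 1) + c) = 2 ^ t + c := by
  have e1 : (2:ℕ) ^ (t + 1) = 2 * 2 ^ t := by ring
  have h1 : (2:ℕ) ^ (t + 1) ≤ 2 ^ k := Nat.pow_le_pow_right (by norm_num) htk
  have hu : 2 ^ k - 1 - (2 ^ k - 2 ^ (t + 1) + c) = 2 ^ (t + 1) - 1 - c := by omega
  have hlog : Nat.log2 (2 ^ (t + 1) - 1 - c) = t := by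
    rw [Nat.log2_eq_log_two]
    exact Nat.log_eq_of_pow_le_of_lt_pow (by omega) (by omega)
  unfold colVal
  rw [hu, hlog]
  omega

-- L2: decomposition of a column index
lemma colVal_decomp {k j : ℕ} (hj : j + 1 < 2 ^ k) :
    ∃ t c, t < k ∧ c < 2 ^ t ∧ j = 2 ^ k - 2 ^ (t + 1) + c := by
  set u := 2 ^ k - 1 - j with hu
  have hu1 : 1 ≤ u := by omega
  set t := Nat.log2 u with ht
  have hlb : 2 ^ t ≤ u := by
    rw [ht, Nat.log2_eq_log_two]; exact Nat.pow_log_le_self 2 (by omega)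
  have hub : u < 2 ^ (t + 1) := by
    rw [ht, Nat.log2_eq_log_two]; exact Nat.lt_pow_succ_log_self (by norm_num) u
  have htk : t < k := by
    by_contra h
    have : 2 ^ k ≤ 2 ^ t := Nat.pow_le_pow_right (by norm_num) (by omega)
    omega
  have h1 : (2:ℕ) ^ (t + 1) ≤ 2 ^ k := Nat.pow_le_pow_right (by norm_num) htk
  refine ⟨t, j - (2 ^ k - 2 ^ (t + 1)), htk, ?_, ?_⟩ <;>
    · have e1 : (2:ℕ) ^ (t + 1) = 2 * 2 ^ t := by ring
      omega

-- uniqueness of the block index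
lemma pow_sandwich {a c u : ℕ} (h1 : 2 ^ a ≤ u) (h2 : u < 2 ^ (a + 1))
    (h3 : 2 ^ c ≤ u) (h4 : u < 2 ^ (c + 1)) : a = c := by
  rcases lt_trichotomy a c with h | h | h
  · have : (2:ℕ) ^ (a + 1) ≤ 2 ^ c := Nat.pow_le_pow_right (by norm_num) (by omega)
    omega
  · exact h
  · have : (2:ℕ) ^ (c + 1) ≤ 2 ^ a := Nat.pow_le_pow_right (by norm_num) (by omega)
    omega

lemma colVal_inj {k j1 j2 : ℕ} (h1 : j1 + 1 < 2 ^ k) (h2 : j2 + 1 < 2 ^ k)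
    (h : colVal k j1 = colVal k j2) : j1 = j2 := by
  obtain ⟨t1, c1, ht1, hc1, rfl⟩ := colVal_decomp h1
  obtain ⟨t2, c2, ht2, hc2, rfl⟩ := colVal_decomp h2
  rw [colVal_block ht1 hc1, colVal_block ht2 hc2] at h
  have e1 : (2:ℕ) ^ (t1 + 1) = 2 * 2 ^ t1 := by ring
  have e2 : (2:ℕ) ^ (t2 + 1) = 2 * 2 ^ t2 := by ring
  have : t1 = t2 := pow_sandwich (a := t1) (c := t2) (u := 2 ^ t1 + c1)
    (by omega) (by omega) (by omega) (by rw [h]; omega)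
  subst this
  omega

lemma log2_spec {v : ℕ} (h : 1 ≤ v) : 2 ^ Nat.log2 v ≤ v ∧ v < 2 ^ (Nat.log2 v + 1) := by
  rw [Nat.log2_eq_log_two]
  exact ⟨Nat.pow_log_le_self 2 (by omega), Nat.lt_pow_succ_log_self (by norm_num) v⟩

lemma zmod2_ne_zero_iff (a : ZMod 2) : a ≠ 0 ↔ a = 1 := by revert a; decide

lemma cw_norm (k b r n mask : ℕ) (hb2 : b + 2 ≤ k) (hr1 : 1 ≤ r) (hrb : r ≤ 2 ^ b)
    (hn : n = 2 ^ k - 2 ^ (b + 2) + r)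
    (hmb : mask.testBit b = true)
    (hmlow : ∀ i, i ≠ b → i < b + 2 → mask.testBit i = false) :
    hammingNorm (cw k n mask) = 2 ^ (k - 1) - 2 ^ (b + 1) := by
  have e2b1 : (2:ℕ) ^ (b + 1) = 2 * 2 ^ b := by ring
  have e2b2 : (2:ℕ) ^ (b + 2) = 4 * 2 ^ b := by ring
  have e2k : (2:ℕ) ^ k = 2 * 2 ^ (k - 1) := by
    rw [← pow_succ']; congr 1; omega
  have hb1k : (2:ℕ) ^ (b + 1) ≤ 2 ^ (k - 1) := Nat.pow_le_pow_right (by norm_num) (by omega)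
  have hbk : (2:ℕ) ^ (b + 2) ≤ 2 ^ k := Nat.pow_le_pow_right (by norm_num) hb2
  have hbpos : (1:ℕ) ≤ 2 ^ b := Nat.one_le_two_pow
  have hbklt : (2:ℕ) ^ b < 2 ^ k := Nat.pow_lt_pow_right (by norm_num) (by omega)
  -- parity is zero on the partial block
  have hzero : ∀ v, 2 ^ (b + 1) ≤ v → v < 2 ^ (b + 1) + r → v &&& mask = 0 := by
    intro v hv1 hv2
    apply Nat.eq_of_testBit_eq
    intro i
    rw [Nat.testBit_and, Nat.zero_testBit]
    rcases Nat.lt_or_ge i (b + 2) with hi | hi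
    · rcases eq_or_ne b i with rfl | hne
      · have hdiv : v / 2 ^ b = 2 := by
          have hv : v = 2 ^ b * 2 + (v - 2 ^ (b+1)) := by omega
          rw [hv, Nat.mul_add_div (by omega)]
          have : (v - 2 ^ (b+1)) / 2 ^ b = 0 := Nat.div_eq_of_lt (by omega)
          omega
        rw [Nat.testBit_eq_decide_div_mod_eq, hdiv]
        simp
      · rw [hmlow i (Ne.symm hne) hi, Bool.and_false]
    · have : v < 2 ^ i := lt_of_lt_of_le (by omega) (Nat.pow_le_pow_right (by norm_num) hi)
      rw [Nat.testBit_lt_two_pow this, Bool.false_and]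
  -- every column value lies in one of the two ranges
  have hj2k : n + 1 ≤ 2 ^ k := by omega
  have key : ∀ j : ℕ, j < n →
      (2 ^ (b + 2) ≤ colVal k j ∧ colVal k j < 2 ^ k) ∨
      (2 ^ (b + 1) ≤ colVal k j ∧ colVal k j < 2 ^ (b + 1) + r) := by
    intro j hj
    obtain ⟨t, c, htk, hc, hjeq⟩ := colVal_decomp (k := k) (j := j) (by omega)
    have hval : colVal k j = 2 ^ t + c := by rw [hjeq]; exact colVal_block htk hc
    have e2t : (2:ℕ) ^ (t + 1) = 2 * 2 ^ t := by ring
    have htk2 : (2:ℕ) ^ (t + 1) ≤ 2 ^ k := Nat.pow_le_pow_right (by norm_num) htk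
    rcases Nat.lt_or_ge t (b + 1) with ht | ht
    · -- impossible: j would be ≥ n
      exfalso
      have : (2:ℕ) ^ (t + 1) ≤ 2 ^ (b + 1) := Nat.pow_le_pow_right (by norm_num) (by omega)
      omega
    rcases Nat.lt_or_ge t (b + 2) with ht2 | ht2
    · -- t = b + 1 : partial block
      have htb : t = b + 1 := by omega
      subst htb
      right
      constructor
      · omega
      · omega
    · -- t ≥ b + 2 : full blocks
      left
      have : (2:ℕ) ^ (b + 2) ≤ 2 ^ t := Nat.pow_le_pow_right (by norm_num) ht2
      omega
  -- step A : transfer the count to value space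
  have hA : hammingNorm (cw k n mask) =
      ((Finset.Ico (2 ^ (b + 2)) (2 ^ k)).filter
        (fun v => parV k (v &&& mask) ≠ 0)).card := by
    show (Finset.univ.filter (fun j : Fin n => cw k n mask j ≠ 0)).card = _
    apply Finset.card_bij (fun (j : Fin n) _ => colVal k (j : ℕ))
    · intro j hj
      simp only [Finset.mem_filter, Finset.mem_univ, true_and] at hj
      rcases key (j : ℕ) j.isLt with ⟨h1, h2⟩ | ⟨h1, h2⟩
      · simp only [Finset.mem_filter, Finset.mem_Ico]
        exact ⟨⟨h1, h2⟩, hj⟩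
      · exfalso
        apply hj
        show parV k (colVal k (j : ℕ) &&& mask) = 0
        rw [hzero _ h1 h2, parV_zero]
    · intro j1 _ j2 _ h
      exact Fin.ext (colVal_inj (by have := j1.isLt; omega) (by have := j2.isLt; omega) h)
    · intro v hv
      simp only [Finset.mem_filter, Finset.mem_Ico] at hv
      obtain ⟨⟨hv1, hv2⟩, hvp⟩ := hv
      have hv0 : 1 ≤ v := by omega
      obtain ⟨hl, hu⟩ := log2_spec hv0
      set t := Nat.log2 v with htdef
      have htk : t < k := by
        by_contra h
        have : (2:ℕ) ^ k ≤ 2 ^ t := Nat.pow_le_pow_right (by norm_num) (by omega)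
        omega
    -- t ≥ b+2
      have htb : b + 2 ≤ t := by
        by_contra h
        have : (2:ℕ) ^ (t + 1) ≤ 2 ^ (b + 2) := Nat.pow_le_pow_right (by norm_num) (by omega)
        omega
      have e2t : (2:ℕ) ^ (t + 1) = 2 * 2 ^ t := by ring
      have h2bt : (2:ℕ) ^ (b+2) ≤ 2 ^ t := Nat.pow_le_pow_right (by norm_num) htb
      have htk2 : (2:ℕ) ^ (t + 1) ≤ 2 ^ k := Nat.pow_le_pow_right (by norm_num) htk
      have hcv : v - 2 ^ t < 2 ^ t := by omega
      have hjlt : 2 ^ k - 2 ^ (t + 1) + (v - 2 ^ t) < n := by omega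
      refine ⟨⟨2 ^ k - 2 ^ (t + 1) + (v - 2 ^ t), hjlt⟩, ?_, ?_⟩
      · simp only [Finset.mem_filter, Finset.mem_univ, true_and]
        show parV k (colVal k _ &&& mask) ≠ 0
        rw [colVal_block htk hcv]
        have : 2 ^ t + (v - 2 ^ t) = v := by omega
        rw [this]
        exact hvp
      · show colVal k _ = v
        rw [colVal_block htk hcv]
        omega
  rw [hA]
  -- step B : the involution v ↦ v ^^^ 2^b halves the interval
  have hflip : ∀ v, parV k ((v ^^^ 2 ^ b) &&& mask) = parV k (v &&& mask) + 1 := by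
    intro v
    have hand : (v ^^^ 2 ^ b) &&& mask = (v &&& mask) ^^^ 2 ^ b := by
      rw [Nat.and_xor_distrib_right]
      congr 1
      apply Nat.eq_of_testBit_eq
      intro i
      rw [Nat.testBit_and, Nat.testBit_two_pow]
      rcases eq_or_ne b i with rfl | hne
      · simp [hmb]
      · simp [hne]
    rw [hand, parV_xor, parV_two_pow (show b < k by omega)]
  have hmem : ∀ v, 2 ^ (b+2) ≤ v → v < 2 ^ k → 2 ^ (b+2) ≤ (v ^^^ 2 ^ b) ∧ (v ^^^ 2 ^ b) < 2 ^ k := by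
    intro v h1 h2
    have hblt2 : (2:ℕ) ^ b < 2 ^ (b + 2) := by omega
    constructor
    · by_contra h
      push_neg at h
      have hv2 : v < 2 ^ (b+2) := by
        have h3 := Nat.xor_lt_two_pow h hblt2
        rwa [xor_cancel_right] at h3
      omega
    · exact Nat.xor_lt_two_pow h2 hbklt
  have hcard2 : ((Finset.Ico (2 ^ (b + 2)) (2 ^ k)).filter (fun v => parV k (v &&& mask) ≠ 0)).card =
      ((Finset.Ico (2 ^ (b + 2)) (2 ^ k)).filter (fun v => ¬ parV k (v &&& mask) ≠ 0)).card := by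
    apply Finset.card_bij (fun v _ => v ^^^ 2 ^ b)
    · intro v hv
      simp only [Finset.mem_filter, Finset.mem_Ico] at hv ⊢
      obtain ⟨⟨h1, h2⟩, hp⟩ := hv
      refine ⟨hmem v h1 h2, ?_⟩
      rw [zmod2_ne_zero_iff] at hp
      show ¬ (parV k ((v ^^^ 2 ^ b) &&& mask) ≠ 0)
      rw [hflip, hp]
      decide
    · intro v1 _ v2 _ h
      have := congrArg (fun x => x ^^^ 2 ^ b) h
      simpa [xor_cancel_right] using this
    · intro w hw
      simp only [Finset.mem_filter, Finset.mem_Ico] at hw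
      obtain ⟨⟨h1, h2⟩, hp⟩ := hw
      refine ⟨w ^^^ 2 ^ b, ?_, by rw [xor_cancel_right]⟩
      simp only [Finset.mem_filter, Finset.mem_Ico]
      refine ⟨hmem w h1 h2, ?_⟩
      have hp0 : parV k (w &&& mask) = 0 := by
        by_contra hc; exact hp hc
      show parV k ((w ^^^ 2 ^ b) &&& mask) ≠ 0
      rw [hflip, hp0]
      decide
  have hsum := Finset.card_filter_add_card_filter_not
    (s := Finset.Ico (2 ^ (b + 2)) (2 ^ k)) (p := fun v => parV k (v &&& mask) ≠ 0)
  rw [Nat.card_Ico] at hsum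
  omega


lemma parV_pow_and {k t : ℕ} (htk : t < k) (M : ℕ) :
    parV k (2 ^ t &&& M) = if M.testBit t then 1 else 0 := by
  cases hMt : M.testBit t
  · have : 2 ^ t &&& M = 0 := by
      apply Nat.eq_of_testBit_eq
      intro i
      rw [Nat.testBit_and, Nat.testBit_two_pow, Nat.zero_testBit]
      rcases eq_or_ne t i with rfl | hne
      · simp [hMt]
      · simp [hne]
    rw [this, parV_zero]
    simp
  · have : 2 ^ t &&& M = 2 ^ t := by
      apply Nat.eq_of_testBit_eq
      intro i
      rw [Nat.testBit_and, Nat.testBit_two_pow]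
      rcases eq_or_ne t i with rfl | hne
      · simp [hMt]
      · simp [hne]
    rw [this, parV_two_pow htk]
    simp

lemma mask_testBit (b y i : ℕ) : (2 ^ b ||| y <<< (b + 2)).testBit i =
    (decide (b = i) || (decide (i ≥ b + 2) && y.testBit (i - (b + 2)))) := by
  simp [Nat.testBit_or, Nat.testBit_two_pow, Nat.testBit_shiftLeft]

lemma cw_inj {k n b : ℕ} (hb2 : b + 2 ≤ k) (hnN : 2 ^ k - 2 ^ (b + 2) ≤ n)
    {y1 y2 : ℕ} (h1 : y1 < 2 ^ (k - b - 2)) (h2 : y2 < 2 ^ (k - b - 2))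
    (h : cw k n (2 ^ b ||| y1 <<< (b + 2)) = cw k n (2 ^ b ||| y2 <<< (b + 2))) :
    y1 = y2 := by
  apply Nat.eq_of_testBit_eq
  intro s
  rcases Nat.lt_or_ge s (k - b - 2) with hs | hs
  · set t := b + 2 + s with htdef
    have htk : t < k := by omega
    have e2t : (2:ℕ) ^ (t + 1) = 2 * 2 ^ t := by ring
    have htk2 : (2:ℕ) ^ (t + 1) ≤ 2 ^ k := Nat.pow_le_pow_right (by norm_num) htk
    have hb3t : (2:ℕ) ^ (b + 2) < 2 ^ (t + 1) :=
      Nat.pow_lt_pow_right (by norm_num) (by omega)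
    have htpos : (0:ℕ) < 2 ^ t := Nat.pow_pos (by norm_num)
    have hjn : 2 ^ k - 2 ^ (t + 1) + 0 < n := by omega
    have hcol : colVal k (2 ^ k - 2 ^ (t + 1) + 0) = 2 ^ t + 0 := colVal_block htk htpos
    have heval := congrFun h ⟨2 ^ k - 2 ^ (t + 1) + 0, hjn⟩
    show y1.testBit s = y2.testBit s
    have hmt : ∀ y : ℕ, (2 ^ b ||| y <<< (b + 2)).testBit t = y.testBit s := by
      intro y
      rw [mask_testBit]
      have : ¬ (b = t) := by omega
      simp [this, show t ≥ b + 2 by omega, show t - (b + 2) = s by omega]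
    have heval' : parV k (2 ^ t &&& (2 ^ b ||| y1 <<< (b + 2))) =
        parV k (2 ^ t &&& (2 ^ b ||| y2 <<< (b + 2))) := by
      have hcol' : colVal k (2 ^ k - 2 ^ (t + 1)) = 2 ^ t := by simpa using hcol
      simpa [cw, hcol'] using heval
    rw [parV_pow_and htk, parV_pow_and htk, hmt, hmt] at heval'
    cases hy1 : y1.testBit s <;> cases hy2 : y2.testBit s <;>
        rw [hy1, hy2] at heval' <;>
        first
          | rfl
          | (simp only [if_true, if_false] at heval'; exact absurd heval' (by decide))
  · have e1 : y1.testBit s = false :=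
      Nat.testBit_lt_two_pow (lt_of_lt_of_le h1 (Nat.pow_le_pow_right (by norm_num) hs))
    have e2 : y2.testBit s = false :=
      Nat.testBit_lt_two_pow (lt_of_lt_of_le h2 (Nat.pow_le_pow_right (by norm_num) hs))
    rw [e1, e2]

lemma numWt_lb (k b r n : ℕ) (hb2 : b + 2 ≤ k) (hr1 : 1 ≤ r) (hrb : r ≤ 2 ^ b)
    (hn : n = 2 ^ k - 2 ^ (b + 2) + r) :
    2 ^ (k - b - 2) ≤ numWt (SCode k n) (2 ^ (k - 1) - 2 ^ (b + 1)) := by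
  classical
  have hnN : 2 ^ k - 2 ^ (b + 2) ≤ n := by omega
  set F := (Finset.range (2 ^ (k - b - 2))).image
    (fun y => cw k n (2 ^ b ||| y <<< (b + 2))) with hF
  have hcardF : F.card = 2 ^ (k - b - 2) := by
    rw [hF, Finset.card_image_of_injOn, Finset.card_range]
    intro y1 hy1 y2 hy2 hEq
    exact cw_inj hb2 hnN (Finset.mem_range.mp hy1) (Finset.mem_range.mp hy2) hEq
  have hsub : ↑F ⊆ {c : Fin n → ZMod 2 | c ∈ SCode k n ∧
      hammingNorm c = 2 ^ (k - 1) - 2 ^ (b + 1)} := by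
    intro c hc
    rw [hF, Finset.coe_image] at hc
    obtain ⟨y, _, rfl⟩ := hc
    refine ⟨cw_mem _ _ _, ?_⟩
    apply cw_norm k b r n _ hb2 hr1 hrb hn
    · rw [mask_testBit]; simp
    · intro i hne hi
      rw [mask_testBit]
      have : ¬ (b = i) := fun hh => hne hh.symm
      simp [this, show ¬ (i ≥ b + 2) by omega]
  calc 2 ^ (k - b - 2) = F.card := hcardF.symm
    _ = (↑F : Set (Fin n → ZMod 2)).ncard := (Set.ncard_coe_finset F).symm
    _ ≤ _ := Set.ncard_le_ncard hsub (Set.toFinite _)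

set_option maxHeartbeats 1000000 in

lemma analysis (k m n d : ℕ) (hd1 : 1 ≤ d) (h2d : 2 * d < n) (hmk : m < k)
    (hR : ((k : ℝ) - m) * Real.log 2 +
        Real.sqrt (((k : ℝ) - m) ^ 2 * Real.log 2 ^ 2 +
          2 * ((k : ℝ) - m) * (2 * (d : ℝ)) * Real.log 2) ≤ (n : ℝ) - 2 * d) :
    ∃ p ∈ Set.Icc (0 : ℝ) (1 / 2),
      (2 : ℝ) ^ ((k : ℤ) - (n : ℤ)) < 2 ^ m * (p ^ d * (1 - p) ^ (n - d)) := by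
  have hlog2 : (0 : ℝ) < Real.log 2 := Real.log_pos (by norm_num)
  have hkm : (0 : ℝ) < (k : ℝ) - m := by
    have : (m : ℝ) < k := by exact_mod_cast hmk
    linarith
  set a : ℝ := ((k : ℝ) - m) * Real.log 2 with ha
  set c : ℝ := 2 * ((k : ℝ) - m) * (2 * (d : ℝ)) * Real.log 2 with hc
  have hapos : 0 < a := mul_pos hkm hlog2
  have hcnn : 0 ≤ c := by
    apply mul_nonneg (mul_nonneg (mul_nonneg (by norm_num) hkm.le) (by positivity)) hlog2.le
  set R : ℝ := (n : ℝ) - 2 * d with hRdef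
  have hac : ((k : ℝ) - m) ^ 2 * Real.log 2 ^ 2 + 2 * ((k : ℝ) - m) * (2 * (d : ℝ)) * Real.log 2
      = a ^ 2 + c := by rw [ha, hc]; ring
  rw [hac] at hR
  have hsq : a ^ 2 + c ≤ (R - a) ^ 2 := by
    have h1 : Real.sqrt (a ^ 2 + c) ≤ R - a := by linarith
    have h2 : Real.sqrt (a ^ 2 + c) ^ 2 = a ^ 2 + c := Real.sq_sqrt (by positivity)
    nlinarith [Real.sqrt_nonneg (a ^ 2 + c)]
  have hquad : 2 * a * (n : ℝ) ≤ R ^ 2 := by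
    have hn2d : (n : ℝ) = R + 2 * d := by rw [hRdef]; ring
    nlinarith
  have hRpos : 0 < R := by
    have := Real.sqrt_nonneg (a ^ 2 + c); linarith
  have hnpos : (0 : ℝ) < n := by
    have : (2 * d : ℝ) ≤ n := by exact_mod_cast (le_of_lt h2d)
    have hd : (1 : ℝ) ≤ d := by exact_mod_cast hd1
    linarith
  set δ : ℝ := R / n with hδdef
  have hδ0 : 0 < δ := div_pos hRpos hnpos
  have hδ1 : δ < 1 := by
    rw [hδdef, div_lt_one hnpos, hRdef]
    have hd : (1 : ℝ) ≤ d := by exact_mod_cast hd1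
    linarith
  set p : ℝ := (1 - δ) / 2 with hp
  have hp0 : 0 < p := by rw [hp]; linarith
  have hp12 : p ≤ 1 / 2 := by rw [hp]; linarith
  have h1p : 1 - p = (1 + δ) / 2 := by rw [hp]; ring
  have h1ppos : 0 < 1 - p := by rw [h1p]; linarith
  refine ⟨p, ⟨hp0.le, hp12⟩, ?_⟩
  -- the calculus estimate
  set g : ℝ → ℝ := fun x => (d : ℝ) * Real.log (1 - x) + ((n : ℝ) - d) * Real.log (1 + x)
    - R * x + n * x ^ 2 / 2 with hg
  have hc1 : ContinuousOn (fun x : ℝ => Real.log (1 - x)) (Set.Icc 0 δ) := by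
    apply ContinuousOn.log
    · exact (continuous_const.sub continuous_id).continuousOn
    · intro x hx
      have hxlt : x < 1 := lt_of_le_of_lt hx.2 hδ1
      show (1 : ℝ) - x ≠ 0
      intro hcon; linarith
  have hc2 : ContinuousOn (fun x : ℝ => Real.log (1 + x)) (Set.Icc 0 δ) := by
    apply ContinuousOn.log
    · exact (continuous_const.add continuous_id).continuousOn
    · intro x hx
      have hx0 : (0 : ℝ) ≤ x := hx.1
      show (1 : ℝ) + x ≠ 0
      intro hcon; linarith
  have hcont : ContinuousOn g (Set.Icc 0 δ) := by
    apply ContinuousOn.add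
    apply ContinuousOn.sub
    apply ContinuousOn.add
    · exact continuousOn_const.mul hc1
    · exact continuousOn_const.mul hc2
    · exact (continuous_const.mul continuous_id).continuousOn
    · exact ((continuous_const.mul (continuous_pow 2)).div_const 2).continuousOn
  have hderiv : ∀ x ∈ Set.Ioo (0:ℝ) δ, 0 < deriv g x := by
    intro x hx
    have hx0 : 0 < x := hx.1
    have hxδ : x < δ := hx.2
    have hx1 : 0 < 1 - x := by linarith
    have hx1' : 0 < 1 + x := by linarith
    have h1 : HasDerivAt (fun y : ℝ => Real.log (1 - y)) (-1 / (1 - x)) x := by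
      have hinner : HasDerivAt (fun y : ℝ => 1 - y) (-1) x := (hasDerivAt_id x).const_sub 1
      exact hinner.log (ne_of_gt hx1)
    have h2 : HasDerivAt (fun y : ℝ => Real.log (1 + y)) (1 / (1 + x)) x := by
      have hinner : HasDerivAt (fun y : ℝ => 1 + y) 1 x := (hasDerivAt_id x).const_add 1
      exact hinner.log (ne_of_gt hx1')
    have h3 : HasDerivAt (fun y : ℝ => R * y) R x := by
      simpa using (hasDerivAt_id x).const_mul R
    have h4 : HasDerivAt (fun y : ℝ => (n : ℝ) * y ^ 2 / 2) ((n : ℝ) * x) x := by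
      have := (hasDerivAt_pow 2 x).const_mul (n : ℝ)
      have h5 := this.div_const 2
      refine h5.congr_deriv ?_
      ring
    have hgd : HasDerivAt g
        ((d : ℝ) * (-1 / (1 - x)) + ((n : ℝ) - d) * (1 / (1 + x)) - R + (n : ℝ) * x) x := by
      have := (((h1.const_mul (d : ℝ)).add (h2.const_mul ((n : ℝ) - d))).sub h3).add h4
      exact this
    rw [hgd.deriv]
    have hkey : (d : ℝ) * (-1 / (1 - x)) + ((n : ℝ) - d) * (1 / (1 + x)) - R + (n : ℝ) * x
        = (R - n * x) * x ^ 2 / ((1 - x) * (1 + x)) := by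
      rw [hRdef]
      field_simp
      ring
    rw [hkey]
    have hnx : n * x < R := by
      rw [hδdef] at hxδ
      calc (n:ℝ) * x < n * (R / n) := by
            apply mul_lt_mul_of_pos_left hxδ hnpos
        _ = R := by field_simp
    have h5 : 0 < R - n * x := by linarith
    have h6 : 0 < (1 - x) * (1 + x) := by nlinarith
    exact div_pos (mul_pos h5 (by positivity)) h6
  have hmono : StrictMonoOn g (Set.Icc 0 δ) := by
    apply strictMonoOn_of_deriv_pos (convex_Icc 0 δ) hcont
    rwa [interior_Icc]
  have hg0 : g 0 = 0 := by simp [hg]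
  have hgδ : 0 < g δ := by
    rw [← hg0]
    exact hmono (Set.left_mem_Icc.mpr hδ0.le) (Set.right_mem_Icc.mpr hδ0.le) hδ0
  have hFlb : R ^ 2 / (2 * n) <
      (d : ℝ) * Real.log (1 - δ) + ((n : ℝ) - d) * Real.log (1 + δ) := by
    have hval : R * δ - (n : ℝ) * δ ^ 2 / 2 = R ^ 2 / (2 * n) := by
      rw [hδdef]; field_simp; ring
    have := hgδ
    rw [hg] at this
    simp only at this
    linarith [this]
  have hfinal : ((k : ℝ) - m) * Real.log 2 <
      (d : ℝ) * Real.log (1 - δ) + ((n : ℝ) - d) * Real.log (1 + δ) := by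
    have h7 : a ≤ R ^ 2 / (2 * n) := by
      rw [le_div_iff₀ (by positivity)]
      nlinarith
    rw [ha] at h7
    linarith
  -- convert to the exponential inequality
  have hlhs : (0 : ℝ) < (2 : ℝ) ^ ((k : ℤ) - (n : ℤ)) := by positivity
  have hrhs : (0 : ℝ) < 2 ^ m * (p ^ d * (1 - p) ^ (n - d)) := by positivity
  rw [← Real.log_lt_log_iff hlhs hrhs]
  have hdn : (d : ℝ) ≤ (n : ℝ) := by
    have : d ≤ n := by omega
    exact_mod_cast this
  have hnd : ((n - d : ℕ) : ℝ) = (n : ℝ) - d := by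
    have : d ≤ n := by omega
    push_cast [this]; ring
  rw [Real.log_zpow, Real.log_mul (by positivity) (by positivity),
    Real.log_mul (by positivity) (by positivity), Real.log_pow, Real.log_pow, Real.log_pow]
  have hlp : Real.log p = Real.log (1 - δ) - Real.log 2 := by
    rw [hp, Real.log_div (by linarith) (by norm_num)]
  have hl1p : Real.log (1 - p) = Real.log (1 + δ) - Real.log 2 := by
    rw [h1p, Real.log_div (by linarith) (by norm_num)]
  rw [hlp, hl1p, hnd]
  push_cast
  nlinarith [hfinal]

/-- With
`γ₁(k,m) = (k-m)·ln 2 + √((k-m)²(ln 2)² + 2(k-m)(2^k - 2^(k-m))·ln 2)`, every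
integer `n` with `2^k - 2^(k-m) + γ₁(k,m) ≤ n ≤ 2^k - 2^(k-m) + 2^(k-m-2)`
yields an ugly (not satisfactory) code `S_{n,k}`. -/
theorem stmt14 (k m n : ℕ) (hk : 3 ≤ k) (hm1 : 1 ≤ m) (hm2 : m ≤ k - 2)
    (hn1 : ((2 ^ k - 2 ^ (k - m) : ℕ) : ℝ) +
        (((k : ℝ) - (m : ℝ)) * Real.log 2 +
          Real.sqrt (((k : ℝ) - (m : ℝ)) ^ 2 * Real.log 2 ^ 2 +
            2 * ((k : ℝ) - (m : ℝ)) * ((2 ^ k - 2 ^ (k - m) : ℕ) : ℝ) * Real.log 2))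
        ≤ (n : ℝ))
    (hn2 : n ≤ 2 ^ k - 2 ^ (k - m) + 2 ^ (k - m - 2)) :
    ¬ IsSatisfactory k (SCode k n) := by
  intro hsat
  have hmk : m + 2 ≤ k := by omega
  set b := k - m - 2 with hb
  have hbm : k - m = b + 2 := by omega
  have hkb : k - b - 2 = m := by omega
  have e2k : (2:ℕ) ^ k = 2 * 2 ^ (k - 1) := by
    rw [← pow_succ']; congr 1; omega
  have e2b2 : (2:ℕ) ^ (b + 2) = 2 * 2 ^ (b + 1) := by ring
  have hb1k1 : (2:ℕ) ^ (b + 1) < 2 ^ (k - 1) :=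
    Nat.pow_lt_pow_right (by norm_num) (by omega)
  have hbk : (2:ℕ) ^ (b + 2) ≤ 2 ^ k := Nat.pow_le_pow_right (by norm_num) (by omega)
  set d := 2 ^ (k - 1) - 2 ^ (b + 1) with hd
  have hN2d : 2 ^ k - 2 ^ (k - m) = 2 * d := by rw [hbm]; omega
  have hd1 : 1 ≤ d := by omega
  -- n is strictly bigger than 2^k - 2^(k-m)
  have hlog2 : (0 : ℝ) < Real.log 2 := Real.log_pos (by norm_num)
  have hkmR : (0 : ℝ) < (k : ℝ) - m := by
    have : (m : ℝ) + 2 ≤ k := by exact_mod_cast hmk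
    linarith
  have hNltn : 2 ^ k - 2 ^ (k - m) < n := by
    have hs := Real.sqrt_nonneg (((k : ℝ) - (m : ℝ)) ^ 2 * Real.log 2 ^ 2 +
      2 * ((k : ℝ) - (m : ℝ)) * ((2 ^ k - 2 ^ (k - m) : ℕ) : ℝ) * Real.log 2)
    have := mul_pos hkmR hlog2
    have hcast : ((2 ^ k - 2 ^ (k - m) : ℕ) : ℝ) < (n : ℝ) := by linarith
    exact_mod_cast hcast
  set r := n - (2 ^ k - 2 ^ (k - m)) with hr
  have hr1 : 1 ≤ r := by omega
  have hrb : r ≤ 2 ^ b := by omega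
  have hneq : n = 2 ^ k - 2 ^ (b + 2) + r := by rw [← hbm]; omega
  have hnum := numWt_lb k b r n (by omega) hr1 hrb hneq
  rw [hkb] at hnum
  have h2d : 2 * d < n := by omega
  rw [hN2d] at hn1
  push_cast at hn1
  obtain ⟨p, hpmem, hplt⟩ := analysis k m n d hd1 h2d (by omega)
    (by linarith)
  have hub := hsat p hpmem
  have hp0 : (0:ℝ) ≤ p := hpmem.1
  have h1p0 : (0:ℝ) ≤ 1 - p := by have := hpmem.2; linarith
  have hterm : (2:ℝ) ^ m * (p ^ d * (1 - p) ^ (n - d)) ≤ Pue (SCode k n) p := by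
    have hmemd : d ∈ Finset.Icc 1 n := by
      rw [Finset.mem_Icc]; omega
    have hstep : (2:ℝ) ^ m * (p ^ d * (1 - p) ^ (n - d)) ≤
        (numWt (SCode k n) d : ℝ) * p ^ d * (1 - p) ^ (n - d) := by
      have hcast : ((2 ^ m : ℕ) : ℝ) ≤ (numWt (SCode k n) d : ℝ) := by
        exact_mod_cast hnum
      push_cast at hcast
      have hnn : (0:ℝ) ≤ p ^ d * (1 - p) ^ (n - d) := by positivity
      calc (2:ℝ) ^ m * (p ^ d * (1 - p) ^ (n - d))
          ≤ (numWt (SCode k n) d : ℝ) * (p ^ d * (1 - p) ^ (n - d)) :=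
            mul_le_mul_of_nonneg_right hcast hnn
        _ = (numWt (SCode k n) d : ℝ) * p ^ d * (1 - p) ^ (n - d) := by ring
    refine le_trans hstep ?_
    unfold Pue
    apply Finset.single_le_sum (f := fun w => (numWt (SCode k n) w : ℝ) * p ^ w * (1 - p) ^ (n - w))
      (fun i _ => by positivity) hmemd
  linarith
end

section
/- Let k ≥ 3 and 1 ≤ m ≤ k−2 be integers, and define γ₂(k,m) = −(k−m)·ln 2 + √((k−m)²(ln 2)² + 2(k−m)(2^k − 2^{k−m−1})·ln 2). Then for every integer n with 2^k − 2^{k−m−1} − 2^{k−m−2} < n ≤ 2^k − 2^{k−m−1} − γ₂(k,m), the code S_{n,k} is ugly (not satisfactory). -/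
open Finset

private lemma zmod2_cases : ∀ a : ZMod 2, a = 0 ∨ a = 1 := by decide

private lemma zmod2_ne : ∀ a : ZMod 2, (¬ a = 1) ↔ a = 0 := by decide

/-- parity of the AND of `x` and `v`, restricted to the low `k` bits. -/
def psum (k x v : ℕ) : ZMod 2 :=
  ∑ b ∈ Finset.range k, if x.testBit b ∧ v.testBit b then 1 else 0

private lemma psum_flip {k x ℓ : ℕ} (hk : ℓ < k) (hx : x.testBit ℓ = true) (v : ℕ) :
    psum k x (v ^^^ 2 ^ ℓ) = psum k x v + 1 := by
  have step : psum k x (v ^^^ 2 ^ ℓ) = ∑ b ∈ Finset.range k,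
      ((if x.testBit b ∧ v.testBit b then (1 : ZMod 2) else 0) +
        (if b = ℓ then (1 : ZMod 2) else 0)) := by
    unfold psum
    apply Finset.sum_congr rfl
    intro b _
    rcases eq_or_ne b ℓ with rfl | hbl
    · rw [if_pos rfl, Nat.testBit_xor, Nat.testBit_two_pow_self, hx]
      cases hvb : v.testBit b <;> decide
    · rw [if_neg hbl, add_zero, Nat.testBit_xor,
        Nat.testBit_two_pow_of_ne (Ne.symm hbl), Bool.xor_false]
  rw [step, Finset.sum_add_distrib]
  congr 1
  rw [Finset.sum_ite_eq' (Finset.range k) ℓ (fun _ => (1:ZMod 2))]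
  simp [Finset.mem_range.mpr hk]

private lemma psum_half {k x t ℓ : ℕ} (hk : ℓ < k) (ht : ℓ < t) (hx : x.testBit ℓ = true)
    (ε : ZMod 2) :
    ((Finset.range (2 ^ t)).filter fun v => psum k x v = ε).card = 2 ^ (t - 1) := by
  have hpow : (2:ℕ) ^ ℓ < 2 ^ t := Nat.pow_lt_pow_right one_lt_two ht
  have key : ∀ δ : ZMod 2,
      ((Finset.range (2 ^ t)).filter fun v => psum k x v = δ).card =
      ((Finset.range (2 ^ t)).filter fun v => psum k x v = δ + 1).card := by
    intro δ
    apply Finset.card_nbij' (fun v => v ^^^ 2 ^ ℓ) (fun v => v ^^^ 2 ^ ℓ)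
    · intro v hv
      simp only [Finset.mem_coe, Finset.mem_filter, Finset.mem_range] at hv ⊢
      exact ⟨Nat.xor_lt_two_pow hv.1 hpow, by rw [psum_flip hk hx, hv.2]⟩
    · intro v hv
      simp only [Finset.mem_coe, Finset.mem_filter, Finset.mem_range] at hv ⊢
      refine ⟨Nat.xor_lt_two_pow hv.1 hpow, ?_⟩
      rw [psum_flip hk hx, hv.2]
      have : δ + 1 + 1 = δ := by
        rcases zmod2_cases δ with h | h <;> rw [h] <;> decide
      exact this
    · intro v _; simp [xor_cancel_right]
    · intro v _; simp [xor_cancel_right]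
  have hsplit := Finset.card_filter_add_card_filter_not
    (s := Finset.range (2^t)) (p := fun v => psum k x v = 1)
  have hneg : ((Finset.range (2^t)).filter fun v => ¬ psum k x v = 1) =
      ((Finset.range (2^t)).filter fun v => psum k x v = 0) := by
    apply Finset.filter_congr
    intro v _
    exact zmod2_ne _
  rw [hneg, Finset.card_range] at hsplit
  have h01 := key 0
  have h10 : ((Finset.range (2 ^ t)).filter fun v => psum k x v = 0 + 1).card =
      ((Finset.range (2 ^ t)).filter fun v => psum k x v = 1).card := by norm_num
  rw [h10] at h01
  have hp2 : (2:ℕ)^t = 2 * 2^(t-1) := by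
    rw [← pow_succ']
    congr 1
    omega
  have hc1 : ((Finset.range (2 ^ t)).filter fun v => psum k x v = 1).card = 2^(t-1) := by omega
  rcases zmod2_cases ε with h | h <;> rw [h] <;> omega

private lemma colVal_eq {k b : ℕ} (hb : b < k) {c : ℕ} (hc : c < 2 ^ b) :
    colVal k (2 ^ k - 2 ^ (b + 1) + c) = 2 ^ b + c := by
  have h1 : (2:ℕ)^(b+1) ≤ 2^k := Nat.pow_le_pow_right (by norm_num) (by omega)
  have h2 : (2:ℕ)^(b+1) = 2 * 2^b := by rw [pow_succ]; ring
  have hu : 2 ^ k - 1 - (2 ^ k - 2 ^ (b + 1) + c) = 2^(b+1) - 1 - c := by omega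
  unfold colVal
  rw [hu]
  have hlog : Nat.log2 (2^(b+1) - 1 - c) = b := by
    rw [Nat.log2_eq_log_two]
    apply Nat.log_eq_of_pow_le_of_lt_pow <;> omega
  rw [hlog]
  omega

private lemma count_Ico (P : ℕ → Prop) [DecidablePred P] (a c : ℕ) :
    ((Finset.Ico a (a + c)).filter P).card = ((Finset.range c).filter fun i => P (a + i)).card := by
  apply Finset.card_nbij' (fun j => j - a) (fun i => a + i)
  · intro j hj
    simp only [Finset.mem_coe, Finset.mem_filter, Finset.mem_Ico, Finset.mem_range] at hj ⊢
    have he : a + (j - a) = j := by omega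
    rw [he]
    exact ⟨by omega, hj.2⟩
  · intro i hi
    simp only [Finset.mem_coe, Finset.mem_filter, Finset.mem_Ico, Finset.mem_range] at hi ⊢
    exact ⟨by omega, hi.2⟩
  · intro j hj
    simp only [Finset.mem_coe, Finset.mem_filter, Finset.mem_Ico] at hj
    dsimp only
    omega
  · intro i _
    dsimp only
    omega

private lemma psum_add_pow {k b : ℕ} (hb : b < k) {x v : ℕ} (hv : v < 2 ^ b) :
    psum k x (2 ^ b + v) = (if x.testBit b then 1 else 0) + psum k x v := by
  have hvb : v.testBit b = false := Nat.testBit_lt_two_pow hv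
  have hb2 : (2^b+v).testBit b = true := by
    rw [Nat.testBit_two_pow_add_eq, hvb]; rfl
  have hbmem : b ∈ Finset.range k := Finset.mem_range.mpr hb
  unfold psum
  rw [← Finset.add_sum_erase _ _ hbmem, ← Finset.add_sum_erase _
    (fun b' => if x.testBit b' ∧ v.testBit b' then (1 : ZMod 2) else 0) hbmem]
  have tail_eq : ∑ b' ∈ (Finset.range k).erase b,
      (if x.testBit b' ∧ (2^b+v).testBit b' then (1 : ZMod 2) else 0) =
      ∑ b' ∈ (Finset.range k).erase b,
      (if x.testBit b' ∧ v.testBit b' then (1 : ZMod 2) else 0) := by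
    apply Finset.sum_congr rfl
    intro b' hb'
    have hne : b' ≠ b := Finset.ne_of_mem_erase hb'
    rcases lt_or_gt_of_ne hne with hlt | hgt
    · rw [Nat.testBit_two_pow_add_gt hlt]
    · have h1 : (2:ℕ)^b + v < 2^b' := by
        have : (2:ℕ)^(b+1) ≤ 2^b' := Nat.pow_le_pow_right (by norm_num) (by omega)
        have : (2:ℕ)^(b+1) = 2*2^b := by rw [pow_succ]; ring
        omega
      rw [Nat.testBit_lt_two_pow h1, Nat.testBit_lt_two_pow (by omega : v < 2^b')]
  rw [tail_eq]
  have head_eq : (if x.testBit b ∧ (2^b+v).testBit b then (1 : ZMod 2) else 0) =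
      if x.testBit b then 1 else 0 := by rw [hb2]; simp
  have head0 : (if x.testBit b ∧ v.testBit b then (1 : ZMod 2) else 0) = 0 := by
    rw [hvb]; simp
  rw [head_eq, head0, zero_add]

private lemma psum_pow {k b : ℕ} (hb : b < k) (x : ℕ) :
    psum k x (2 ^ b) = if x.testBit b then 1 else 0 := by
  unfold psum
  rw [Finset.sum_eq_single_of_mem b (Finset.mem_range.mpr hb)]
  · rw [Nat.testBit_two_pow_self]
    simp
  · intro b' _ hne
    rw [Nat.testBit_two_pow_of_ne (Ne.symm hne)]
    simp

private lemma zmod2_shift : ∀ a b : ZMod 2, (a + b = 1) ↔ (b = 1 + a) := by decide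

private lemma block_count {k x t b : ℕ} (hxt : x.testBit t = true) (htb : t < b) (hbk : b < k) :
    ((Finset.range (2 ^ b)).filter fun i => psum k x (2 ^ b + i) = 1).card = 2 ^ (b - 1) := by
  have hcong : ∀ i ∈ Finset.range (2^b),
      (psum k x (2 ^ b + i) = 1) ↔ (psum k x i = 1 + (if x.testBit b then 1 else 0)) := by
    intro i hi
    rw [psum_add_pow hbk (Finset.mem_range.mp hi)]
    exact zmod2_shift _ _
  rw [Finset.filter_congr hcong]
  exact psum_half (htb.trans hbk) htb hxt _

private lemma full_count {k x t : ℕ} (hxt : x.testBit t = true) :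
    ∀ e, t + 2 + e ≤ k →
    ((Finset.range (2 ^ k - 2 ^ (k - e))).filter fun j => psum k x (colVal k j) = 1).card
      = 2 ^ (k - 1) - 2 ^ (k - e - 1) := by
  intro e
  induction e with
  | zero => intro _; simp
  | succ e ih =>
    intro h
    have ihe := ih (by omega)
    set b := k - e - 1 with hbdef
    have hb1 : b + 1 = k - e := by omega
    have hbk : b < k := by omega
    have htb : t < b := by omega
    have hp2 : (2:ℕ)^(b+1) = 2 * 2^b := by rw [pow_succ]; ring
    have hple : (2:ℕ)^(b+1) ≤ 2^k := Nat.pow_le_pow_right (by norm_num) (by omega)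
    have hmono : (2:ℕ)^b ≤ 2^(k-1) := Nat.pow_le_pow_right (by norm_num) (by omega)
    have hrange : Finset.range (2^k - 2^b) =
        Finset.range (2^k - 2^(b+1)) ∪ Finset.Ico (2^k - 2^(b+1)) (2^k - 2^b) := by
      rw [Finset.range_eq_Ico, Finset.range_eq_Ico]
      rw [Finset.Ico_union_Ico_eq_Ico (by omega) (by omega)]
    have hIcoCount : ((Finset.Ico (2^k - 2^(b+1)) (2^k - 2^b)).filter
        (fun j => psum k x (colVal k j) = 1)).card = 2^(b-1) := by
      have he : 2^k - 2^b = (2^k - 2^(b+1)) + 2^b := by omega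
      rw [he, count_Ico]
      have hc : ∀ i ∈ Finset.range (2^b),
          (psum k x (colVal k (2^k - 2^(b+1) + i)) = 1) ↔ (psum k x (2^b + i) = 1) := by
        intro i hi
        rw [colVal_eq hbk (Finset.mem_range.mp hi)]
      rw [Finset.filter_congr hc]
      exact block_count hxt htb hbk
    have hdisj : Disjoint ((Finset.range (2^k - 2^(b+1))).filter
          (fun j => psum k x (colVal k j) = 1))
        ((Finset.Ico (2^k - 2^(b+1)) (2^k - 2^b)).filter
          (fun j => psum k x (colVal k j) = 1)) := by
      apply Finset.disjoint_filter_filter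
      rw [Finset.range_eq_Ico]
      exact Finset.Ico_disjoint_Ico_consecutive _ _ _
    rw [← hb1] at ihe
    have hcards : ((Finset.range (2 ^ k - 2 ^ b)).filter
        (fun j => psum k x (colVal k j) = 1)).card
        = (2^(k-1) - 2^b) + 2^(b-1) := by
      rw [hrange, Finset.filter_union, Finset.card_union_of_disjoint hdisj, hIcoCount, ihe]
    have hke : k - (e+1) = b := by omega
    have hke2 : k - (e+1) - 1 = b - 1 := by omega
    rw [hke, hcards]
    have hbb : (2:ℕ)^b = 2 * 2^(b-1) := by
      rw [← pow_succ']
      congr 1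
      omega
    omega


private lemma artanh_gt {u : ℝ} (hu0 : 0 < u) (hu1 : u < 1) :
    2 * u < Real.log (1 + u) - Real.log (1 - u) := by
  have key : StrictMonoOn (fun u : ℝ => Real.log (1+u) - Real.log (1-u) - 2*u)
      (Set.Ico 0 1) := by
    apply strictMonoOn_of_deriv_pos (convex_Ico 0 1)
    · apply ContinuousOn.sub
      apply ContinuousOn.sub
      · apply ContinuousOn.log (by fun_prop)
        intro x hx
        simp only [Set.mem_Ico] at hx
        nlinarith [hx.1]
      · apply ContinuousOn.log (by fun_prop)
        intro x hx
        simp only [Set.mem_Ico] at hx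
        nlinarith [hx.2]
      · fun_prop
    · intro x hx
      rw [interior_Ico] at hx
      obtain ⟨hx0, hx1⟩ := hx
      have h1 : (1:ℝ) + x ≠ 0 := by nlinarith
      have h2 : (1:ℝ) - x ≠ 0 := by nlinarith
      have d1 : HasDerivAt (fun u : ℝ => Real.log (1+u)) (1+x)⁻¹ x := by
        simpa [Function.comp_def] using (Real.hasDerivAt_log h1).comp x ((hasDerivAt_id x).const_add 1)
      have d2 : HasDerivAt (fun u : ℝ => Real.log (1-u)) (-(1-x)⁻¹) x := by
        have := (Real.hasDerivAt_log h2).comp x ((hasDerivAt_id x).const_sub 1)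
        simpa [Function.comp_def] using this
      have d3 : HasDerivAt (fun u : ℝ => 2*u) (2:ℝ) x := by
        simpa using (hasDerivAt_id x).const_mul (2:ℝ)
      have d : HasDerivAt (fun u : ℝ => Real.log (1+u) - Real.log (1-u) - 2*u)
          ((1+x)⁻¹ - (-(1-x)⁻¹) - 2) x := (d1.sub d2).sub d3
      rw [d.deriv]
      have hq : (1+x)⁻¹ - (-(1-x)⁻¹) - 2 = 2*x^2/((1+x)*(1-x)) := by
        field_simp
        ring
      rw [hq]
      apply div_pos (by nlinarith) (by nlinarith)
  have h0 : (0:ℝ) ∈ Set.Ico (0:ℝ) 1 := by constructor <;> norm_num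
  have hu : u ∈ Set.Ico (0:ℝ) 1 := ⟨hu0.le, hu1⟩
  have := key h0 hu hu0
  simp only [Real.log_one, add_zero, sub_zero, mul_zero] at this
  linarith [this]

private lemma pinsker_aux {x : ℝ} (hx0 : 0 < x) (hx1 : x < 1/2) :
    2*x^2 < (1/2 - x) * Real.log (1 - 2*x) + (1/2 + x) * Real.log (1 + 2*x) := by
  have key : StrictMonoOn (fun y : ℝ =>
      (1/2 - y) * Real.log (1 - 2*y) + (1/2 + y) * Real.log (1 + 2*y) - 2*y^2)
      (Set.Ico 0 (1/2)) := by
    apply strictMonoOn_of_deriv_pos (convex_Ico 0 (1/2))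
    · apply ContinuousOn.sub
      apply ContinuousOn.add
      · apply ContinuousOn.mul (by fun_prop)
        apply ContinuousOn.log (by fun_prop)
        intro y hy
        simp only [Set.mem_Ico] at hy
        nlinarith [hy.2]
      · apply ContinuousOn.mul (by fun_prop)
        apply ContinuousOn.log (by fun_prop)
        intro y hy
        simp only [Set.mem_Ico] at hy
        nlinarith [hy.1]
      · fun_prop
    · intro y hy
      rw [interior_Ico] at hy
      obtain ⟨hy0, hy1⟩ := hy
      have h1 : (1:ℝ) - 2*y ≠ 0 := by nlinarith
      have h2 : (1:ℝ) + 2*y ≠ 0 := by nlinarith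
      have dA : HasDerivAt (fun y : ℝ => 1 - 2*y) (-2) y := by
        simpa using ((hasDerivAt_id y).const_mul 2).const_sub 1
      have dB : HasDerivAt (fun y : ℝ => 1 + 2*y) (2) y := by
        simpa using ((hasDerivAt_id y).const_mul 2).const_add 1
      have dlogA : HasDerivAt (fun y : ℝ => Real.log (1 - 2*y)) ((1-2*y)⁻¹ * (-2)) y :=
        by have := (Real.hasDerivAt_log h1).comp y dA; exact this
      have dlogB : HasDerivAt (fun y : ℝ => Real.log (1 + 2*y)) ((1+2*y)⁻¹ * 2) y :=
        by have := (Real.hasDerivAt_log h2).comp y dB; exact this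
      have dc1 : HasDerivAt (fun y : ℝ => 1/2 - y) (-1) y := by
        simpa using (hasDerivAt_id y).const_sub (1/2 : ℝ)
      have dc2 : HasDerivAt (fun y : ℝ => 1/2 + y) (1) y := by
        simpa using (hasDerivAt_id y).const_add (1/2 : ℝ)
      have dP1 : HasDerivAt (fun y : ℝ => (1/2 - y) * Real.log (1 - 2*y))
          ((-1) * Real.log (1-2*y) + (1/2 - y) * ((1-2*y)⁻¹ * (-2))) y := dc1.mul dlogA
      have dP2 : HasDerivAt (fun y : ℝ => (1/2 + y) * Real.log (1 + 2*y))
          ((1) * Real.log (1+2*y) + (1/2 + y) * ((1+2*y)⁻¹ * 2)) y := dc2.mul dlogB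
      have dsq : HasDerivAt (fun y : ℝ => 2*y^2) (2*(2*y)) y := by
        simpa using (hasDerivAt_pow 2 y).const_mul (2:ℝ)
      have d : HasDerivAt (fun y : ℝ =>
          (1/2 - y) * Real.log (1 - 2*y) + (1/2 + y) * Real.log (1 + 2*y) - 2*y^2)
          (((-1) * Real.log (1-2*y) + (1/2 - y) * ((1-2*y)⁻¹ * (-2))) +
            ((1) * Real.log (1+2*y) + (1/2 + y) * ((1+2*y)⁻¹ * 2)) - 2*(2*y)) y :=
        (dP1.add dP2).sub dsq
      rw [d.deriv]
      have e1 : (1/2 - y) * ((1-2*y)⁻¹ * (-2)) = -1 := by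
        field_simp
      have e2 : (1/2 + y) * ((1+2*y)⁻¹ * 2) = 1 := by
        field_simp
      rw [e1, e2]
      have hat := artanh_gt (u := 2*y) (by linarith) (by linarith)
      linarith [hat]
  have h0 : (0:ℝ) ∈ Set.Ico (0:ℝ) (1/2) := by constructor <;> norm_num
  have hu : x ∈ Set.Ico (0:ℝ) (1/2) := ⟨hx0.le, hx1⟩
  have := key h0 hu hx0
  simp only [mul_zero, sub_zero, add_zero, Real.log_one, zero_pow, mul_zero] at this
  linarith [this]

private lemma zmod2_ne0 : ∀ a : ZMod 2, a ≠ 0 ↔ a = 1 := by decide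

private lemma hamming_card {n : ℕ} (f : ℕ → ZMod 2) :
    hammingNorm (fun j : Fin n => f (j : ℕ)) =
      ((Finset.range n).filter fun j => f j = 1).card := by
  rw [hammingNorm]
  apply Finset.card_bij (fun (a : Fin n) _ => (a : ℕ))
  · intro a ha
    simp only [Finset.mem_filter, Finset.mem_univ, true_and] at ha
    exact Finset.mem_filter.mpr ⟨Finset.mem_range.mpr a.isLt, (zmod2_ne0 _).mp ha⟩
  · intro a1 _ a2 _ hh
    exact Fin.ext hh
  · intro b hb
    simp only [Finset.mem_filter, Finset.mem_range] at hb
    refine ⟨⟨b, hb.1⟩, ?_, rfl⟩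
    simp only [Finset.mem_filter, Finset.mem_univ, true_and]
    exact (zmod2_ne0 _).mpr hb.2

private lemma test_low {t i : ℕ} (hi : i < 2 ^ (t + 1)) : i.testBit t = true ↔ 2 ^ t ≤ i := by
  constructor
  · intro h
    exact Nat.ge_two_pow_of_testBit h
  · intro h
    have h2 : (2:ℕ)^(t+1) = 2 * 2^t := by rw [pow_succ]; ring
    have hc : i - 2^t < 2^t := by omega
    have he : i = 2^t + (i - 2^t) := by omega
    rw [he, Nat.testBit_two_pow_add_eq, Nat.testBit_lt_two_pow hc]
    rfl


set_option maxHeartbeats 2000000 in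
/-- With
`γ₂(k,m) = -(k-m)·ln 2 + √((k-m)²(ln 2)² + 2(k-m)(2^k - 2^(k-m-1))·ln 2)`, every
integer `n` with `2^k - 2^(k-m-1) - 2^(k-m-2) < n ≤ 2^k - 2^(k-m-1) - γ₂(k,m)`
yields an ugly (not satisfactory) code `S_{n,k}`. -/
theorem stmt15 (k m n : ℕ) (hk : 3 ≤ k) (hm1 : 1 ≤ m) (hm2 : m ≤ k - 2)
    (hn1 : 2 ^ k - 2 ^ (k - m - 1) - 2 ^ (k - m - 2) < n)
    (hn2 : (n : ℝ) ≤ ((2 ^ k - 2 ^ (k - m - 1) : ℕ) : ℝ) -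
        (-(((k : ℝ) - (m : ℝ)) * Real.log 2) +
          Real.sqrt (((k : ℝ) - (m : ℝ)) ^ 2 * Real.log 2 ^ 2 +
            2 * ((k : ℝ) - (m : ℝ)) * ((2 ^ k - 2 ^ (k - m - 1) : ℕ) : ℝ) * Real.log 2))) :
    ¬ IsSatisfactory k (SCode k n) := by
  obtain ⟨t, rfl⟩ : ∃ t, k = m + 2 + t := ⟨k - m - 2, by omega⟩
  have hkm1 : m + 2 + t - m - 1 = t + 1 := by omega
  have hkm2 : m + 2 + t - m - 2 = t := by omega
  rw [hkm1, hkm2] at hn1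
  rw [hkm1] at hn2
  have hKcast : ((m + 2 + t : ℕ) : ℝ) - (m : ℝ) = (t : ℝ) + 2 := by push_cast; ring
  rw [hKcast] at hn2
  set L : ℝ := Real.log 2 with hLdef
  have hL : 0 < L := Real.log_pos (by norm_num)
  -- nat power facts
  have hpm : (2:ℕ)^(m+2+t) = 2 * 2^(m+1+t) := by rw [← pow_succ']; congr 1; omega
  have hpm2 : (2:ℕ)^(t+2) ≤ 2^(m+1+t) := Nat.pow_le_pow_right (by norm_num) (by omega)
  have hpt1 : (2:ℕ)^(t+1) = 2 * 2^t := by rw [pow_succ]; ring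
  have hpt2 : (2:ℕ)^(t+2) = 2 * 2^(t+1) := by rw [pow_succ]; ring
  have hpt0 : (1:ℕ) ≤ 2^t := Nat.one_le_two_pow
  -- N and its positivity
  have hNpos : 1 ≤ 2^(m+2+t) - 2^(t+1) := by omega
  have hNcast : (1:ℝ) ≤ ((2^(m+2+t) - 2^(t+1) : ℕ) : ℝ) := by exact_mod_cast hNpos
  -- γ > 0, hence n < N
  have hNL : (0:ℝ) < 2*((t:ℝ)+2) * ((2^(m+2+t) - 2^(t+1) : ℕ) : ℝ) * L := by
    have ht0 : (0:ℝ) ≤ (t:ℝ) := Nat.cast_nonneg t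
    apply mul_pos (mul_pos (by linarith) (by linarith)) hL
  have hargnn : (0:ℝ) ≤ ((t:ℝ)+2)^2 * L^2 + 2*((t:ℝ)+2) * ((2^(m+2+t) - 2^(t+1) : ℕ) : ℝ) * L := by
    have h1 : (0:ℝ) ≤ ((t:ℝ)+2)^2 * L^2 := by positivity
    linarith
  have hγpos : (0:ℝ) < -(((t:ℝ)+2) * L) +
      Real.sqrt (((t:ℝ)+2)^2 * L^2 + 2*((t:ℝ)+2) * ((2^(m+2+t) - 2^(t+1) : ℕ) : ℝ) * L) := by
    have ht0 : (0:ℝ) ≤ (t:ℝ) := Nat.cast_nonneg t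
    have h1 : (((t:ℝ)+2) * L)^2 < ((t:ℝ)+2)^2 * L^2 +
        2*((t:ℝ)+2) * ((2^(m+2+t) - 2^(t+1) : ℕ) : ℝ) * L := by nlinarith [hNL]
    have h2 : ((t:ℝ)+2) * L < Real.sqrt (((t:ℝ)+2)^2 * L^2 +
        2*((t:ℝ)+2) * ((2^(m+2+t) - 2^(t+1) : ℕ) : ℝ) * L) := by
      apply lt_of_pow_lt_pow_left₀ 2 (Real.sqrt_nonneg _)
      rw [Real.sq_sqrt hargnn]
      exact h1
    linarith
  have hnN : n < 2^(m+2+t) - 2^(t+1) := by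
    by_contra hcon
    push_neg at hcon
    have : ((2^(m+2+t) - 2^(t+1) : ℕ) : ℝ) ≤ (n:ℝ) := by exact_mod_cast hcon
    linarith
  -- key integers
  obtain ⟨s, hsdef⟩ : ∃ s, s = 2^(m+2+t) - 2^(t+1) - n := ⟨_, rfl⟩
  obtain ⟨r, hrdef⟩ : ∃ r, r = n - (2^(m+2+t) - 2^(t+2)) := ⟨_, rfl⟩
  have hs1 : 1 ≤ s := by omega
  have hs2 : s < 2^t := by omega
  have hr1 : 2^t < r := by omega
  have hr2 : r < 2^(t+1) := by omega
  have hbase : n = (2^(m+2+t) - 2^(t+2)) + r := by omega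
  obtain ⟨w, hwdef⟩ : ∃ w, w = 2^(m+1+t) - 2^(t+1) + (r - 2^t) := ⟨_, rfl⟩
  have hw1 : 1 ≤ w := by omega
  have h2w : n = 2*w + s := by omega
  have hwn : w ≤ n := by omega
  -- the codewords
  obtain ⟨xv, hxvdef⟩ : ∃ xv : ℕ → ℕ, xv = fun h => 2^(t+2) * h + 2^t := ⟨_, rfl⟩
  obtain ⟨cw, hcwdef⟩ : ∃ cw : ℕ → (Fin n → ZMod 2),
      cw = fun h => fun j : Fin n => psum (m+2+t) (xv h) (colVal (m+2+t) (j : ℕ)) := ⟨_, rfl⟩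
  have hx2t : (2:ℕ)^t < 2^(t+2) := by omega
  have hxbit : ∀ h b, (xv h).testBit b =
      if b < t+2 then ((2:ℕ)^t).testBit b else h.testBit (b - (t+2)) := by
    intro h b
    rw [hxvdef]
    exact Nat.testBit_two_pow_mul_add h hx2t b
  have hxt : ∀ h, (xv h).testBit t = true := by
    intro h
    rw [hxbit, if_pos (by omega), Nat.testBit_two_pow_self]
  have hxt1 : ∀ h, (xv h).testBit (t+1) = false := by
    intro h
    rw [hxbit, if_pos (by omega), Nat.testBit_two_pow_of_ne (by omega)]
  have hxlow : ∀ h b, b < t → (xv h).testBit b = false := by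
    intro h b hb
    rw [hxbit, if_pos (by omega), Nat.testBit_two_pow_of_ne (by omega)]
  have hxhigh : ∀ h i, (xv h).testBit (t+2+i) = h.testBit i := by
    intro h i
    rw [hxbit, if_neg (by omega)]
    congr 1
    omega
  -- membership
  have hmem : ∀ h : ℕ, cw h ∈ SCode (m+2+t) n := by
    intro h
    have hrepr : cw h = ∑ b ∈ (Finset.range (m+2+t)).filter (fun b => (xv h).testBit b),
        Hrow (m+2+t) n ((m+2+t) - b) := by
      rw [hcwdef]
      funext j
      rw [Finset.sum_apply]
      show psum (m+2+t) (xv h) (colVal (m+2+t) (j:ℕ)) = _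
      unfold psum Hrow
      rw [Finset.sum_filter]
      apply Finset.sum_congr rfl
      intro b hb
      have hbK : b < m+2+t := Finset.mem_range.mp hb
      have hKb : m+2+t - (m+2+t - b) = b := by omega
      rw [hKb]
      by_cases hxb : (xv h).testBit b <;> simp [hxb]
    rw [hrepr]
    apply Submodule.sum_mem
    intro b hb
    have hbK : b < m+2+t := Finset.mem_range.mp (Finset.mem_filter.mp hb).1
    apply Submodule.subset_span
    have harg : (m+2+t) - b - 1 + 1 = (m+2+t) - b := by omega
    exact ⟨⟨(m+2+t) - b - 1, by omega⟩, by
      show Hrow (m+2+t) n ((m+2+t) - b - 1 + 1) = Hrow (m+2+t) n ((m+2+t) - b)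
      rw [harg]⟩
  -- weight
  have hwt : ∀ h : ℕ, hammingNorm (cw h) = w := by
    intro h
    rw [hcwdef]
    have hstep : hammingNorm (fun j : Fin n => psum (m+2+t) (xv h) (colVal (m+2+t) (j:ℕ))) =
        ((Finset.range n).filter
        (fun j => psum (m+2+t) (xv h) (colVal (m+2+t) j) = 1)).card :=
      hamming_card (fun j => psum (m+2+t) (xv h) (colVal (m+2+t) j))
    rw [hstep]
    -- split
    have hsplitset : Finset.range n = Finset.range (2^(m+2+t) - 2^(t+2)) ∪
        Finset.Ico (2^(m+2+t) - 2^(t+2)) ((2^(m+2+t) - 2^(t+2)) + r) := by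
      have hnbr : (2^(m+2+t) - 2^(t+2)) + r = n := by omega
      rw [Finset.range_eq_Ico, Finset.range_eq_Ico, ← hnbr, Finset.Ico_union_Ico_eq_Ico (by omega) (by omega)]
    have hdisj : Disjoint ((Finset.range (2^(m+2+t) - 2^(t+2))).filter
          (fun j => psum (m+2+t) (xv h) (colVal (m+2+t) j) = 1))
        ((Finset.Ico (2^(m+2+t) - 2^(t+2)) ((2^(m+2+t) - 2^(t+2)) + r)).filter
          (fun j => psum (m+2+t) (xv h) (colVal (m+2+t) j) = 1)) := by
      apply Finset.disjoint_filter_filter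
      rw [Finset.range_eq_Ico]
      exact Finset.Ico_disjoint_Ico_consecutive _ _ _
    rw [hsplitset, Finset.filter_union, Finset.card_union_of_disjoint hdisj]
    -- full part
    have hfull := full_count (k := m+2+t) (hxt h) m (by omega)
    have he1 : m+2+t - m = t+2 := by omega
    have he2 : m+2+t - 1 = m+1+t := by omega
    have he3 : m+2+t - m - 1 = t+1 := by omega
    rw [he3, he1, he2] at hfull
    rw [hfull]
    -- partial part
    have hpart : ((Finset.Ico (2^(m+2+t) - 2^(t+2)) ((2^(m+2+t) - 2^(t+2)) + r)).filter
        (fun j => psum (m+2+t) (xv h) (colVal (m+2+t) j) = 1)).card = r - 2^t := by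
      rw [count_Ico]
      have hc : ∀ i ∈ Finset.range r,
          ((psum (m+2+t) (xv h) (colVal (m+2+t) ((2^(m+2+t) - 2^(t+2)) + i)) = 1) ↔
            (2^t ≤ i)) := by
        intro i hi
        have hir : i < r := Finset.mem_range.mp hi
        have hit1 : i < 2^(t+1) := by omega
        have hcv : colVal (m+2+t) ((2^(m+2+t) - 2^(t+2)) + i) = 2^(t+1) + i := by
          have := colVal_eq (k := m+2+t) (b := t+1) (by omega) (c := i) hit1
          rw [show t+1+1 = t+2 from rfl] at this
          exact this
        rw [hcv, psum_add_pow (by omega) hit1, hxt1 h, if_neg (by simp), zero_add]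
        -- psum of low value
        have hlow : psum (m+2+t) (xv h) i = if i.testBit t then 1 else 0 := by
          unfold psum
          rw [Finset.sum_eq_single_of_mem t (Finset.mem_range.mpr (by omega))]
          · rw [hxt h]
            simp
          · intro b _ hne
            rcases Nat.lt_or_ge b t with hbt | hbt
            · rw [hxlow h b hbt]
              simp
            · have hbt' : t + 1 ≤ b := by omega
              have : i.testBit b = false := Nat.testBit_lt_two_pow
                (lt_of_lt_of_le hit1 (Nat.pow_le_pow_right (by norm_num) hbt'))
              rw [this]
              simp
        rw [hlow]
        constructor
        · intro hcond
          by_cases hbit : i.testBit t = true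
          · exact (test_low hit1).mp hbit
          · rw [if_neg (by simpa using hbit)] at hcond
            exact absurd hcond (by decide)
        · intro hge
          rw [if_pos ((test_low hit1).mpr hge)]
      rw [Finset.filter_congr hc]
      have : (Finset.range r).filter (fun i => 2^t ≤ i) = Finset.Ico (2^t) r := by
        ext a
        simp [Finset.mem_filter, Finset.mem_range, Finset.mem_Ico]
        omega
      rw [this, Nat.card_Ico]
    rw [hpart]
    omega
  -- injectivity
  have hinj : Set.InjOn cw ((Finset.range (2^m) : Finset ℕ) : Set ℕ) := by
    intro h1 h1m h2 h2m heq
    simp only [Finset.coe_range, Set.mem_Iio] at h1m h2m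
    apply Nat.eq_of_testBit_eq
    intro i
    by_cases him : i < m
    · have hjn : 2^(m+2+t) - 2^(t+2+i+1) < n := by
        have : (2:ℕ)^(t+3) ≤ 2^(t+2+i+1) := Nat.pow_le_pow_right (by norm_num) (by omega)
        have h8 : (2:ℕ)^(t+3) = 2*2^(t+2) := by rw [pow_succ]; ring
        omega
      have hbK : t+2+i < m+2+t := by omega
      have hcolv : colVal (m+2+t) (2^(m+2+t) - 2^(t+2+i+1)) = 2^(t+2+i) := by
        have := colVal_eq (k := m+2+t) (b := t+2+i) hbK (c := 0) (Nat.two_pow_pos _)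
        simpa using this
      have hev := congrFun heq ⟨2^(m+2+t) - 2^(t+2+i+1), hjn⟩
      show h1.testBit i = h2.testBit i
      rw [hcwdef] at hev
      simp only at hev
      rw [hcolv, psum_pow hbK, psum_pow hbK, hxhigh h1 i, hxhigh h2 i] at hev
      cases hA : h1.testBit i <;> cases hB : h2.testBit i <;>
        rw [hA, hB] at hev <;> simp at hev <;> rfl
    · have hA : h1.testBit i = false := Nat.testBit_lt_two_pow
        (lt_of_lt_of_le h1m (Nat.pow_le_pow_right (by norm_num) (by omega)))
      have hB : h2.testBit i = false := Nat.testBit_lt_two_pow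
        (lt_of_lt_of_le h2m (Nat.pow_le_pow_right (by norm_num) (by omega)))
      rw [hA, hB]
  -- numWt lower bound
  have hnumwt : (2^m : ℕ) ≤ numWt (SCode (m+2+t) n) w := by
    have hsub : (((Finset.range (2^m)).image cw : Finset _) : Set (Fin n → ZMod 2)) ⊆
        {c : Fin n → ZMod 2 | c ∈ SCode (m+2+t) n ∧ hammingNorm c = w} := by
      intro c hc
      simp only [Finset.coe_image, Set.mem_image, Finset.mem_coe, Finset.mem_range] at hc
      obtain ⟨h, _, rfl⟩ := hc
      exact ⟨hmem h, hwt h⟩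
    calc (2^m : ℕ) = ((Finset.range (2^m)).image cw).card := by
          rw [Finset.card_image_of_injOn hinj, Finset.card_range]
      _ = (((Finset.range (2^m)).image cw : Finset _) : Set (Fin n → ZMod 2)).ncard :=
          (Set.ncard_coe_finset _).symm
      _ ≤ _ := Set.ncard_le_ncard hsub (Set.toFinite _)
  -- the probability p
  intro hsat
  obtain ⟨p, hpdef⟩ : ∃ p : ℝ, p = (w:ℝ)/(n:ℝ) := ⟨_, rfl⟩
  have hn0 : (0:ℝ) < (n:ℝ) := by
    have : 0 < n := by omega
    exact_mod_cast this
  have hw0 : (0:ℝ) < (w:ℝ) := by exact_mod_cast hw1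
  have hp0 : 0 < p := hpdef ▸ div_pos hw0 hn0
  have h2wr : (n:ℝ) = 2*(w:ℝ) + (s:ℝ) := by exact_mod_cast h2w
  have hs0 : (0:ℝ) < (s:ℝ) := by exact_mod_cast hs1
  have hp12 : p < 1/2 := by
    rw [hpdef, div_lt_iff₀ hn0]
    linarith
  have h1p : 0 < 1 - p := by linarith
  -- lower bound for Pue
  have hwmem : w ∈ Finset.Icc 1 n := Finset.mem_Icc.mpr ⟨hw1, hwn⟩
  have hPge : (2:ℝ)^m * (p^w * (1-p)^(n-w)) ≤ Pue (SCode (m+2+t) n) p := by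
    have hnum : ((2^m : ℕ):ℝ) ≤ (numWt (SCode (m+2+t) n) w : ℝ) := Nat.cast_le.mpr hnumwt
    have hstep : (2:ℝ)^m * (p^w * (1-p)^(n-w)) ≤
        (numWt (SCode (m+2+t) n) w : ℝ) * p^w * (1-p)^(n-w) := by
      rw [← mul_assoc]
      apply mul_le_mul_of_nonneg_right _ (pow_nonneg h1p.le _)
      apply mul_le_mul_of_nonneg_right _ (pow_nonneg hp0.le _)
      push_cast at hnum
      exact hnum
    refine hstep.trans ?_
    unfold Pue
    apply Finset.single_le_sum (f := fun w' =>
      (numWt (SCode (m+2+t) n) w' : ℝ) * p^w' * (1-p)^(n-w')) _ hwmem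
    intro i _
    exact mul_nonneg (mul_nonneg (Nat.cast_nonneg _) (pow_nonneg hp0.le _))
      (pow_nonneg h1p.le _)
  -- analytic inequality
  obtain ⟨X, hXdef⟩ : ∃ X : ℝ, X = (s:ℝ)/(2*(n:ℝ)) := ⟨_, rfl⟩
  have hX0 : 0 < X := hXdef ▸ div_pos hs0 (by linarith)
  have hX12 : X < 1/2 := by
    rw [hXdef, div_lt_iff₀ (by linarith)]
    linarith
  have e1 : 1 - 2*X = 2*p := by
    rw [hXdef, hpdef]
    field_simp
    linear_combination h2wr
  have e2 : 1 + 2*X = 2*(1-p) := by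
    rw [hXdef, hpdef]
    field_simp
    linear_combination (-1:ℝ) * h2wr
  have e3 : (n:ℝ)*(1/2 - X) = (w:ℝ) := by
    rw [hXdef]
    field_simp
    linear_combination h2wr
  have e4 : (n:ℝ)*(1/2 + X) = (n:ℝ) - (w:ℝ) := by
    rw [hXdef]
    field_simp
    linear_combination (-1:ℝ) * h2wr
  have hpins := pinsker_aux hX0 hX12
  rw [e1, e2, Real.log_mul (by norm_num) (ne_of_gt hp0),
    Real.log_mul (by norm_num) (ne_of_gt h1p)] at hpins
  rw [← hLdef] at hpins
  have hmul := mul_lt_mul_of_pos_left hpins hn0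
  have hXX : (n:ℝ)*(2*X^2) = (s:ℝ)^2/(2*(n:ℝ)) := by
    rw [hXdef]
    field_simp
  have hRHSe : (n:ℝ)*((1/2-X)*(L + Real.log p) + (1/2+X)*(L + Real.log (1-p))) =
      (w:ℝ)*(L+Real.log p) + ((n:ℝ)-(w:ℝ))*(L+Real.log (1-p)) := by
    linear_combination (L + Real.log p)*e3 + (L + Real.log (1-p))*e4
  rw [hXX, hRHSe] at hmul
  -- the γ chain
  have hcastNs : ((2^(m+2+t) - 2^(t+1) : ℕ):ℝ) = (n:ℝ) + (s:ℝ) := by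
    have hNn : (2^(m+2+t) - 2^(t+1) : ℕ) = n + s := by omega
    rw [hNn]
    push_cast
    ring
  rw [hcastNs] at hn2 hargnn
  have hsqrtle : Real.sqrt (((t:ℝ)+2)^2 * L^2 +
      2*((t:ℝ)+2) * ((n:ℝ) + (s:ℝ)) * L) ≤ (s:ℝ) + ((t:ℝ)+2)*L := by
    linarith
  have hsq : ((t:ℝ)+2)^2 * L^2 + 2*((t:ℝ)+2) * ((n:ℝ) + (s:ℝ)) * L ≤
      ((s:ℝ) + ((t:ℝ)+2)*L)^2 := by
    have h0 : (0:ℝ) ≤ (s:ℝ) + ((t:ℝ)+2)*L := by positivity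
    calc ((t:ℝ)+2)^2 * L^2 + 2*((t:ℝ)+2) * ((n:ℝ) + (s:ℝ)) * L
        = (Real.sqrt (((t:ℝ)+2)^2 * L^2 +
            2*((t:ℝ)+2) * ((n:ℝ) + (s:ℝ)) * L))^2 :=
          (Real.sq_sqrt hargnn).symm
      _ ≤ ((s:ℝ) + ((t:ℝ)+2)*L)^2 := by
          apply pow_le_pow_left₀ (Real.sqrt_nonneg _) hsqrtle
  have hs2n : 2*((t:ℝ)+2)*L*(n:ℝ) ≤ (s:ℝ)^2 := by
    nlinarith
  have hKL : ((t:ℝ)+2)*L ≤ (s:ℝ)^2/(2*(n:ℝ)) := by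
    rw [le_div_iff₀ (by linarith)]
    linarith
  -- conclude
  have hsat' := hsat p ⟨hp0.le, hp12.le⟩
  have hLpos : (0:ℝ) < (2:ℝ)^m * (p ^ w * (1-p)^(n-w)) := by positivity
  have hRpos : (0:ℝ) < (2:ℝ)^(((m+2+t : ℕ) : ℤ) - (n : ℤ)) := by positivity
  have hgoal : (2:ℝ)^(((m+2+t : ℕ) : ℤ) - (n : ℤ)) < (2:ℝ)^m * (p^w * (1-p)^(n-w)) := by
    rw [← Real.exp_log hRpos, ← Real.exp_log hLpos]
    apply Real.exp_lt_exp.mpr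
    rw [Real.log_zpow, Real.log_mul (by positivity) (by positivity),
      Real.log_mul (by positivity) (by positivity), Real.log_pow, Real.log_pow, Real.log_pow]
    rw [← hLdef]
    have hnw : ((n - w : ℕ) : ℝ) = (n:ℝ) - (w:ℝ) := by
      push_cast [Nat.cast_sub hwn]
      ring
    rw [hnw]
    push_cast
    linarith
  linarith
end

section
/- For every integer k ≥ 2, let N_k denote the number of integers n with 2^{k−1} ≤ n ≤ 2^k − 1 such that S_{n,k} is satisfactory. Then N_k < k + (2^{(k+5)/2}/3)·√(k³·ln 2). -/
open Finset

def par2 (a b L : ℕ) : ZMod 2 :=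
  ∑ t ∈ Finset.range L, if a.testBit t && b.testBit t then 1 else 0

lemma zmod2_cases_s16 (c : ZMod 2) : c = 0 ∨ c = 1 := by revert c; decide

lemma zmod2_ne_zero {c : ZMod 2} : c ≠ 0 ↔ c = 1 := by revert c; decide

lemma colVal_formula {k m c : ℕ} (hmk : m < k) (hc : c < 2 ^ m) :
    colVal k (2 ^ k - 2 ^ (m + 1) + c) = 2 ^ m + c := by
  have h1 : 2 ^ (m + 1) = 2 * 2 ^ m := by ring
  have h2 : 2 ^ (m + 1) ≤ 2 ^ k := Nat.pow_le_pow_right (by norm_num) (by omega)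
  have h3 : (1:ℕ) ≤ 2 ^ m := Nat.one_le_two_pow
  have key : 2 ^ k - 1 - (2 ^ k - 2 ^ (m + 1) + c) = 2 ^ (m+1) - 1 - c := by omega
  have hlog : Nat.log2 (2 ^ k - 1 - (2 ^ k - 2 ^ (m + 1) + c)) = m := by
    rw [key, Nat.log2_eq_log_two]
    exact Nat.log_eq_of_pow_le_of_lt_pow (by omega) (by omega)
  unfold colVal
  rw [hlog]
  omega

lemma card_filter_range_split (a b : ℕ) (h : a ≤ b) (P : ℕ → Prop) [DecidablePred P] :
    ((range b).filter P).card
      = ((range a).filter P).card + ((Ico a b).filter P).card := by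
  simp only [range_eq_Ico]
  rw [← Finset.Ico_union_Ico_eq_Ico (Nat.zero_le a) h, filter_union,
    card_union_of_disjoint (disjoint_filter_filter (Finset.Ico_disjoint_Ico_consecutive 0 a b))]

lemma card_filter_Ico_shift (a n : ℕ) (P : ℕ → Prop) [DecidablePred P] :
    ((Ico a (a + n)).filter P).card = ((range n).filter (fun c => P (a + c))).card := by
  apply Finset.card_nbij' (fun j => j - a) (fun c => a + c)
  · intro x hx; simp only [mem_coe, mem_filter, mem_Ico, mem_range] at *
    obtain ⟨⟨h1, h2⟩, h3⟩ := hx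
    refine ⟨by omega, ?_⟩
    have : a + (x - a) = x := by omega
    rw [this]; exact h3
  · intro x hx; simp only [mem_coe, mem_filter, mem_Ico, mem_range] at *
    exact ⟨⟨by omega, by omega⟩, hx.2⟩
  · intro x hx; simp only [mem_coe, mem_filter, mem_Ico] at hx; dsimp only; omega
  · intro x hx; dsimp only; omega

/-- bits of `c` above its size don't matter in `par2` -/
lemma par2_high {c m L a : ℕ} (hc : c < 2 ^ m) (hmL : m ≤ L) :
    par2 a c L = par2 a c m := by
  unfold par2
  rw [← Finset.sum_range_add_sum_Ico _ hmL]
  have : ∀ t ∈ Ico m L, (if a.testBit t && c.testBit t then (1 : ZMod 2) else 0) = 0 := by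
    intro t ht
    simp only [mem_Ico] at ht
    have : c.testBit t = false :=
      Nat.testBit_lt_two_pow (lt_of_lt_of_le hc (Nat.pow_le_pow_right (by norm_num) ht.1))
    simp [this]
  rw [Finset.sum_eq_zero this, add_zero]

lemma testBit_pow_add {m c t : ℕ} (hc : c < 2 ^ m) :
    (2 ^ m + c).testBit t = if t < m then c.testBit t else decide (t = m) := by
  have : 2 ^ m + c = 2 ^ m * 1 + c := by ring
  rw [this, Nat.testBit_two_pow_mul_add 1 hc t]
  by_cases h : t < m
  · simp [h]
  · simp only [h, if_false]
    rcases Nat.eq_or_lt_of_le (Nat.le_of_not_lt h) with h' | h'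
    · simp [← h']
    · have h2 : (1:ℕ) < 2 ^ (t - m) :=
        Nat.one_lt_two_pow_iff.mpr (by omega)
      rw [Nat.testBit_lt_two_pow h2]
      simp; omega

lemma par2_shift {c m L a : ℕ} (hc : c < 2 ^ m) (hmL : m < L) :
    par2 a (2 ^ m + c) L = par2 a c m + (if a.testBit m then 1 else 0) := by
  unfold par2
  have hsplit : range L = range (m+1) ∪ Ico (m+1) L := by
    rw [range_eq_Ico, range_eq_Ico, Finset.Ico_union_Ico_eq_Ico (Nat.zero_le _) (by omega)]
  rw [hsplit, Finset.sum_union (by rw [range_eq_Ico]; exact Finset.Ico_disjoint_Ico_consecutive 0 (m+1) L)]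
  have hrest : ∀ t ∈ Ico (m+1) L, (if a.testBit t && (2^m+c).testBit t then (1 : ZMod 2) else 0) = 0 := by
    intro t ht
    simp only [mem_Ico] at ht
    have : (2^m+c).testBit t = false := by
      apply Nat.testBit_lt_two_pow
      calc 2^m + c < 2^m + 2^m := by omega
      _ = 2^(m+1) := by ring
      _ ≤ 2^t := Nat.pow_le_pow_right (by norm_num) ht.1
    simp [this]
  rw [Finset.sum_eq_zero hrest, add_zero, Finset.sum_range_succ]
  congr 1
  · apply Finset.sum_congr rfl
    intro t ht
    simp only [mem_range] at ht
    rw [testBit_pow_add hc]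
    simp [ht]
  · rw [testBit_pow_add hc]
    simp

lemma zmod2_add_one_eq_one {x : ZMod 2} : x + 1 = 1 ↔ x = 0 := by revert x; decide

lemma par2_zero_of_no_bits {L y c : ℕ} (h : ∀ t, t < L → y.testBit t = false) :
    par2 y c L = 0 := by
  apply Finset.sum_eq_zero
  intro t ht
  simp only [mem_range] at ht
  simp [h t ht]

lemma par_count : ∀ (L y : ℕ), (∃ t, t < L ∧ y.testBit t = true) →
    ((range (2 ^ L)).filter (fun c => par2 y c L = 1)).card = 2 ^ (L - 1) := by
  intro L
  induction L with
  | zero => rintro y ⟨t, ht, _⟩; omega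
  | succ L ih =>
    intro y hy
    rw [card_filter_range_split (2 ^ L) (2 ^ (L+1))
      (Nat.pow_le_pow_right (by norm_num) (by omega)) _]
    have h2L : 2 ^ (L+1) = 2 ^ L + 2 ^ L := by ring
    rw [h2L, card_filter_Ico_shift (2 ^ L) (2 ^ L) _]
    have hlowf : (range (2 ^ L)).filter (fun c => par2 y c (L+1) = 1)
        = (range (2 ^ L)).filter (fun c => par2 y c L = 1) := by
      apply filter_congr; intro c hc; simp only [mem_range] at hc
      rw [par2_high hc (by omega)]
    have hupf : (range (2 ^ L)).filter (fun c => par2 y (2 ^ L + c) (L+1) = 1)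
        = (range (2 ^ L)).filter (fun c => par2 y c L + (if y.testBit L then 1 else 0) = 1) := by
      apply filter_congr; intro c hc; simp only [mem_range] at hc
      rw [par2_shift hc (by omega)]
    rw [hlowf, hupf]
    by_cases hex : ∃ t, t < L ∧ y.testBit t = true
    · obtain ⟨t0, ht0, hb0⟩ := hex
      have hL1 : 1 ≤ L := by omega
      have hcnt1 := ih y ⟨t0, ht0, hb0⟩
      have hcnt0 : ((range (2 ^ L)).filter (fun c => par2 y c L = 0)).card
          = 2 ^ L - 2 ^ (L-1) := by
        have htot := Finset.card_filter_add_card_filter_not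
          (s := range (2 ^ L)) (p := fun c => par2 y c L = 1)
        have hcongr : (range (2 ^ L)).filter (fun c => ¬ par2 y c L = 1)
            = (range (2 ^ L)).filter (fun c => par2 y c L = 0) := by
          apply filter_congr; intro c _
          simp only [← zmod2_ne_zero]
          tauto
        rw [hcongr, hcnt1, Finset.card_range] at htot
        omega
      by_cases hbL : y.testBit L = true
      · simp only [if_pos hbL, zmod2_add_one_eq_one]
        rw [hcnt1, hcnt0]
        have : (1:ℕ) ≤ 2 ^ (L-1) := Nat.one_le_two_pow
        have h3 : 2 ^ L = 2 ^ (L-1) + 2 ^ (L-1) := by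
          obtain ⟨L', rfl⟩ : ∃ L', L = L' + 1 := ⟨L-1, by omega⟩
          simp only [Nat.add_sub_cancel, pow_succ]; omega
        simp only [Nat.add_sub_cancel]
        omega
      · simp only [if_neg hbL, add_zero]
        rw [hcnt1]
        have h3 : 2 ^ L = 2 ^ (L-1) + 2 ^ (L-1) := by
          obtain ⟨L', rfl⟩ : ∃ L', L = L' + 1 := ⟨L-1, by omega⟩
          simp only [Nat.add_sub_cancel, pow_succ]; omega
        simp only [Nat.add_sub_cancel]
        omega
    · push_neg at hex
      have hbits : ∀ t, t < L → y.testBit t = false := by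
        intro t ht
        simpa using hex t ht
      have hbL : y.testBit L = true := by
        obtain ⟨t, ht, hb⟩ := hy
        rcases Nat.lt_or_ge t L with h | h
        · exact absurd hb (by simp [hbits t h])
        · have : t = L := by omega
          rwa [← this]
      have hlow0 : (range (2 ^ L)).filter (fun c => par2 y c L = 1) = ∅ := by
        apply Finset.filter_false_of_mem
        intro c _
        rw [par2_zero_of_no_bits hbits]
        decide
      have hup1 : (range (2 ^ L)).filter
          (fun c => par2 y c L + (if y.testBit L then 1 else 0) = 1) = range (2 ^ L) := by
        apply Finset.filter_true_of_mem
        intro c _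
        rw [par2_zero_of_no_bits hbits, hbL]
        decide
      rw [hlow0, hup1]
      simp

lemma par_count0 (L y : ℕ) (h : ∃ t, t < L ∧ y.testBit t = true) :
    ((range (2 ^ L)).filter (fun c => par2 y c L = 0)).card = 2 ^ (L - 1) := by
  have htot := Finset.card_filter_add_card_filter_not
    (s := range (2 ^ L)) (p := fun c => par2 y c L = 1)
  have hcongr : (range (2 ^ L)).filter (fun c => ¬ par2 y c L = 1)
      = (range (2 ^ L)).filter (fun c => par2 y c L = 0) := by
    apply filter_congr; intro c _
    simp only [← zmod2_ne_zero]
    tauto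
  obtain ⟨t0, ht0, _⟩ := id h
  have hL1 : 1 ≤ L := by omega
  have h3 : 2 ^ L = 2 ^ (L-1) + 2 ^ (L-1) := by
    obtain ⟨L', rfl⟩ : ∃ L', L = L' + 1 := ⟨L-1, by omega⟩
    simp only [Nat.add_sub_cancel, pow_succ]; omega
  rw [hcongr, par_count L y h, Finset.card_range] at htot
  omega

def cword (k n mask : ℕ) : Fin n → ZMod 2 := fun j => par2 mask (colVal k (j : ℕ)) k

lemma wlow (k y m0 : ℕ) (hm0 : 1 ≤ m0) (hy : ∃ t, t < m0 ∧ y.testBit t = true) :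
    ∀ d, d ≤ k - m0 →
      ((range (2 ^ k - 2 ^ (k - d))).filter (fun j => par2 y (colVal k j) k = 1)).card
        = 2 ^ (k - 1) - 2 ^ (k - 1 - d) := by
  intro d
  induction d with
  | zero => simp
  | succ d ihd =>
    intro hd
    have hm0k : m0 ≤ k := by omega
    set m' := k - d - 1 with hm'
    have hm'm0 : m0 ≤ m' := by omega
    have hm'k : m' < k := by omega
    have hp1 : 2 ^ (m' + 1) ≤ 2 ^ k := Nat.pow_le_pow_right (by norm_num) (by omega)
    have hp2 : (1:ℕ) ≤ 2 ^ m' := Nat.one_le_two_pow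
    have hkd : k - d = m' + 1 := by omega
    have hkd1 : k - (d + 1) = m' := by omega
    have hsplit := card_filter_range_split (2 ^ k - 2 ^ (m' + 1)) (2 ^ k - 2 ^ m')
      (by omega) (fun j => par2 y (colVal k j) k = 1)
    have hIco : (2 ^ k - 2 ^ m') = (2 ^ k - 2 ^ (m' + 1)) + 2 ^ m' := by
      have : 2 ^ (m' + 1) = 2 * 2 ^ m' := by ring
      omega
    have hshift : ((Ico (2 ^ k - 2 ^ (m' + 1)) (2 ^ k - 2 ^ m')).filter
        (fun j => par2 y (colVal k j) k = 1)).card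
        = ((range (2 ^ m')).filter (fun c => par2 y (2 ^ m' + c) k = 1)).card := by
      rw [hIco, card_filter_Ico_shift]
      congr 1
      apply filter_congr
      intro c hc
      rw [colVal_formula hm'k (mem_range.mp hc)]
    have hblock : ((range (2 ^ m')).filter (fun c => par2 y (2 ^ m' + c) k = 1)).card
        = 2 ^ (m' - 1) := by
      obtain ⟨t0, ht0, hb0⟩ := hy
      have hcong : (range (2 ^ m')).filter (fun c => par2 y (2 ^ m' + c) k = 1)
          = (range (2 ^ m')).filter
              (fun c => par2 y c m' + (if y.testBit m' then 1 else 0) = 1) := by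
        apply filter_congr; intro c hc; simp only [mem_range] at hc
        rw [par2_shift hc hm'k]
      rw [hcong]
      by_cases hbm : y.testBit m' = true
      · have : (range (2 ^ m')).filter
            (fun c => par2 y c m' + (if y.testBit m' then 1 else 0) = 1)
            = (range (2 ^ m')).filter (fun c => par2 y c m' = 0) := by
          apply filter_congr; intro c _
          rw [if_pos hbm, zmod2_add_one_eq_one]
        rw [this, par_count0 m' y ⟨t0, by omega, hb0⟩]
      · have : (range (2 ^ m')).filter
            (fun c => par2 y c m' + (if y.testBit m' then 1 else 0) = 1)
            = (range (2 ^ m')).filter (fun c => par2 y c m' = 1) := by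
          apply filter_congr; intro c _
          rw [if_neg hbm, add_zero]
        rw [this, par_count m' y ⟨t0, by omega, hb0⟩]
    have hprev := ihd (by omega)
    rw [hkd] at hprev
    rw [hkd1, hsplit, hprev, hshift, hblock]
    have e1 : 2 ^ (k - 1 - d) = 2 * 2 ^ (k - 1 - (d+1)) := by
      rw [← pow_succ']
      congr 1
      omega
    have e2 : 2 ^ (m' - 1) = 2 ^ (k - 1 - (d + 1)) := by congr 1; omega
    have e3 : 2 ^ (k - 1 - d) ≤ 2 ^ (k-1) := Nat.pow_le_pow_right (by norm_num) (by omega)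
    omega

lemma count_testBit (t r : ℕ) (hr : r ≤ 2 ^ (t + 1)) :
    ((range r).filter (fun c => c.testBit t = true)).card = r - 2 ^ t := by
  have hset : (range r).filter (fun c => c.testBit t = true) = Ico (2 ^ t) r := by
    ext c
    simp only [mem_filter, mem_range, mem_Ico]
    constructor
    · rintro ⟨h1, h2⟩
      exact ⟨Nat.ge_two_pow_of_testBit h2, h1⟩
    · rintro ⟨h1, h2⟩
      refine ⟨h2, ?_⟩
      have hc : c = 2 ^ t + (c - 2 ^ t) := by omega
      rw [hc, Nat.testBit_two_pow_add_eq]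
      have : (c - 2 ^ t).testBit t = false := by
        apply Nat.testBit_lt_two_pow; omega
      rw [this]; rfl
  rw [hset, Nat.card_Ico]

lemma mask_testBit_s16 (M h t : ℕ) (hM : 1 ≤ M) :
    (2 ^ (M+1) * h + 2 ^ (M-1)).testBit t
      = if t < M + 1 then decide (t = M - 1) else h.testBit (t - (M + 1)) := by
  have hlt : 2 ^ (M-1) < 2 ^ (M+1) := Nat.pow_lt_pow_right (by norm_num) (by omega)
  rw [Nat.testBit_two_pow_mul_add h hlt t]
  by_cases ht : t < M + 1
  · simp only [ht, if_true, Nat.testBit_two_pow]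
    by_cases he : t = M - 1
    · simp [he]
    · simp [he, (Ne.symm he : M - 1 ≠ t)]
  · simp [ht]

lemma par2_single (mask c M : ℕ) (hM : 1 ≤ M)
    (hmask : ∀ t, t < M → mask.testBit t = decide (t = M - 1)) :
    par2 mask c M = if c.testBit (M-1) then 1 else 0 := by
  unfold par2
  rw [Finset.sum_eq_single_of_mem (M-1) (mem_range.mpr (by omega))]
  · rw [hmask (M-1) (by omega)]
    simp
  · intro b hb hbne
    simp only [mem_range] at hb
    rw [hmask b hb]
    simp [hbne]

lemma weight_count (k M s h : ℕ) (hM : 1 ≤ M) (hMk : M + 2 ≤ k) (hs1 : 1 ≤ s)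
    (hs2 : s ≤ 2 ^ M) :
    ((range (2 ^ k - 2 ^ (M+1) + s)).filter
      (fun j => par2 (2 ^ (M+1) * h + 2 ^ (M-1)) (colVal k j) k = 1)).card
      = 2 ^ (k-1) - 2 ^ M + (s - 2 ^ (M-1)) := by
  set mask := 2 ^ (M+1) * h + 2 ^ (M-1) with hmaskdef
  have hMk' : M < k := by omega
  have hbit : ∃ t, t < M ∧ mask.testBit t = true :=
    ⟨M - 1, by omega, by rw [mask_testBit_s16 M h (M-1) hM, if_pos (by omega)]; simp⟩
  have hsplit := card_filter_range_split (2 ^ k - 2 ^ (M+1)) (2 ^ k - 2 ^ (M+1) + s)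
    (by omega) (fun j => par2 mask (colVal k j) k = 1)
  have hlow : ((range (2 ^ k - 2 ^ (M+1))).filter
      (fun j => par2 mask (colVal k j) k = 1)).card = 2 ^ (k-1) - 2 ^ M := by
    have := wlow k mask M hM hbit (k - M - 1) (by omega)
    have e1 : k - (k - M - 1) = M + 1 := by omega
    have e2 : k - 1 - (k - M - 1) = M := by omega
    rwa [e1, e2] at this
  have hup : ((Ico (2 ^ k - 2 ^ (M+1)) (2 ^ k - 2 ^ (M+1) + s)).filter
      (fun j => par2 mask (colVal k j) k = 1)).card = s - 2 ^ (M-1) := by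
    rw [card_filter_Ico_shift]
    have hcong : (range s).filter (fun c => par2 mask (colVal k (2 ^ k - 2 ^ (M+1) + c)) k = 1)
        = (range s).filter (fun c => c.testBit (M-1) = true) := by
      apply filter_congr
      intro c hc
      simp only [mem_range] at hc
      have hcM : c < 2 ^ M := by omega
      rw [colVal_formula hMk' hcM, par2_shift hcM hMk']
      have hmb : mask.testBit M = false := by
        rw [mask_testBit_s16 M h M hM, if_pos (by omega)]
        simp only [decide_eq_false_iff_not]
        omega
      rw [hmb, if_neg Bool.false_ne_true, add_zero]
      rw [par2_single mask c M hM (fun t ht => by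
        rw [mask_testBit_s16 M h t hM, if_pos (by omega)])]
      rcases Bool.eq_false_or_eq_true (c.testBit (M-1)) with hb | hb <;>
        simp [hb, show (0:ZMod 2) ≠ 1 by decide]
    rw [hcong, count_testBit (M-1) s (by rw [Nat.sub_add_cancel hM]; exact hs2)]
  omega

lemma hammingNorm_eq_card {n : ℕ} (f : Fin n → ZMod 2) :
    hammingNorm f = (Finset.univ.filter (fun j : Fin n => f j = 1)).card := by
  rw [hammingNorm]
  congr 1
  apply filter_congr
  intro j _
  simp only [← zmod2_ne_zero]

lemma hammingNorm_cword (k n mask : ℕ) :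
    hammingNorm (cword k n mask)
      = ((range n).filter (fun j => par2 mask (colVal k j) k = 1)).card := by
  rw [hammingNorm_eq_card]
  apply Finset.card_bij (fun (a : Fin n) _ => (a : ℕ))
  · intro a ha
    simp only [mem_filter, mem_univ, true_and] at ha
    simp only [mem_filter, mem_range]
    exact ⟨a.2, ha⟩
  · intro a _ b _ hab; exact Fin.ext hab
  · intro b hb
    simp only [mem_filter, mem_range] at hb
    exact ⟨⟨b, hb.1⟩, by simp only [mem_filter, mem_univ, true_and]; exact hb.2, rfl⟩

lemma ite_smul_ite (a b : Bool) :
    (if a then (1 : ZMod 2) else 0) • (if b then (1 : ZMod 2) else 0)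
      = if a && b then 1 else 0 := by
  rcases a <;> rcases b <;> simp

lemma cword_mem (k n mask : ℕ) : cword k n mask ∈ SCode k n := by
  have hrepr : cword k n mask = ∑ i : Fin k,
      (if mask.testBit (k - ((i : ℕ) + 1)) then (1 : ZMod 2) else 0) • Hrow k n ((i : ℕ) + 1) := by
    funext j
    rw [Finset.sum_apply]
    have g : ℕ → ZMod 2 := fun t =>
      if mask.testBit t && (colVal k (j : ℕ)).testBit t then 1 else 0
    have hterm : ∀ i : Fin k,
        ((if mask.testBit (k - ((i : ℕ) + 1)) then (1 : ZMod 2) else 0) • Hrow k n ((i : ℕ) + 1)) j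
          = (fun t : ℕ => if mask.testBit t && (colVal k (j : ℕ)).testBit t
              then (1 : ZMod 2) else 0) (k - 1 - (i : ℕ)) := by
      intro i
      have he : k - ((i : ℕ) + 1) = k - 1 - (i : ℕ) := by omega
      simp only [Pi.smul_apply, Hrow, he]
      exact ite_smul_ite _ _
    rw [Finset.sum_congr rfl (fun i _ => hterm i),
      Fin.sum_univ_eq_sum_range (fun i => (fun t : ℕ =>
        if mask.testBit t && (colVal k (j : ℕ)).testBit t
          then (1 : ZMod 2) else 0) (k - 1 - i)) k,
      Finset.sum_range_reflect (fun t : ℕ =>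
        if mask.testBit t && (colVal k (j : ℕ)).testBit t then (1 : ZMod 2) else 0) k]
    rfl
  rw [hrepr]
  exact Submodule.sum_mem _ (fun i _ =>
    Submodule.smul_mem _ _ (Submodule.subset_span ⟨i, rfl⟩))

lemma par2_pow (mask t k : ℕ) (htk : t < k) :
    par2 mask (2 ^ t) k = if mask.testBit t then 1 else 0 := by
  unfold par2
  rw [Finset.sum_eq_single_of_mem t (mem_range.mpr htk)]
  · rw [Nat.testBit_two_pow_self]
    rcases Bool.eq_false_or_eq_true (mask.testBit t) with hb | hb <;> simp [hb]
  · intro b _ hbne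
    rw [Nat.testBit_two_pow_of_ne (Ne.symm hbne)]
    simp

lemma cword_eval_pow (k n mask t : ℕ) (htk : t < k) (hjn : 2 ^ k - 2 ^ (t+1) < n) :
    cword k n mask ⟨2 ^ k - 2 ^ (t+1), hjn⟩ = if mask.testBit t then 1 else 0 := by
  show par2 mask (colVal k (2 ^ k - 2 ^ (t+1))) k = _
  have h0 : (0:ℕ) < 2 ^ t := Nat.two_pow_pos t
  have := colVal_formula (k := k) (m := t) (c := 0) htk h0
  rw [Nat.add_zero] at this
  rw [this, Nat.add_zero, par2_pow mask t k htk]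

lemma numWt_ge (k M s : ℕ) (hM : 1 ≤ M) (hMk : M + 2 ≤ k) (hs1 : 1 ≤ s) (hs2 : s ≤ 2 ^ M) :
    2 ^ (k - 1 - M) ≤ numWt (SCode k (2 ^ k - 2 ^ (M+1) + s))
      (2 ^ (k-1) - 2 ^ M + (s - 2 ^ (M-1))) := by
  set n := 2 ^ k - 2 ^ (M+1) + s with hn
  set w := 2 ^ (k-1) - 2 ^ M + (s - 2 ^ (M-1)) with hw
  set f : ℕ → (Fin n → ZMod 2) := fun h => cword k n (2 ^ (M+1) * h + 2 ^ (M-1)) with hf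
  have hpkM : 2 ^ (M+1) ≤ 2 ^ k := Nat.pow_le_pow_right (by norm_num) (by omega)
  have hinj : Set.InjOn f ↑(range (2 ^ (k - 1 - M))) := by
    intro a ha b hb hab
    simp only [coe_range, Set.mem_Iio] at ha hb
    apply Nat.eq_of_testBit_eq
    intro t
    rcases Nat.lt_or_ge t (k - 1 - M) with ht | ht
    · have ht' : t + (M + 1) < k := by omega
      have hp : (2:ℕ) ^ (t + (M+1) + 1) ≤ 2 ^ k := Nat.pow_le_pow_right (by norm_num) (by omega)
      have hp2 : (2:ℕ) ^ (M+1) ≤ 2 ^ (t + (M+1) + 1) := Nat.pow_le_pow_right (by norm_num) (by omega)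
      have hjn : 2 ^ k - 2 ^ (t + (M+1) + 1) < n := by
        have hx : (1:ℕ) ≤ 2 ^ (M+1) := Nat.one_le_two_pow
        omega
      have hae := cword_eval_pow k n (2 ^ (M+1) * a + 2 ^ (M-1)) (t + (M+1)) ht' hjn
      have hbe := cword_eval_pow k n (2 ^ (M+1) * b + 2 ^ (M-1)) (t + (M+1)) ht' hjn
      have hcond : ¬(t + (M+1) < M + 1) := by omega
      have e1 : t + (M+1) - (M+1) = t := by omega
      have this2 : cword k n (2 ^ (M+1) * a + 2 ^ (M-1)) ⟨2 ^ k - 2 ^ (t + (M+1) + 1), hjn⟩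
          = cword k n (2 ^ (M+1) * b + 2 ^ (M-1)) ⟨2 ^ k - 2 ^ (t + (M+1) + 1), hjn⟩ := by
        rw [show cword k n (2 ^ (M+1) * a + 2 ^ (M-1)) = f a from rfl,
          show cword k n (2 ^ (M+1) * b + 2 ^ (M-1)) = f b from rfl, hab]
      rw [hae, hbe, mask_testBit_s16 M a (t + (M+1)) hM, if_neg hcond,
        mask_testBit_s16 M b (t + (M+1)) hM, if_neg hcond, e1] at this2
      rcases Bool.eq_false_or_eq_true (a.testBit t) with hb1 | hb1 <;>
        rcases Bool.eq_false_or_eq_true (b.testBit t) with hb2 | hb2 <;>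
          simp_all
    · rw [Nat.testBit_lt_two_pow (lt_of_lt_of_le ha (Nat.pow_le_pow_right (by norm_num) ht)),
        Nat.testBit_lt_two_pow (lt_of_lt_of_le hb (Nat.pow_le_pow_right (by norm_num) ht))]
  have hsub : ↑((range (2 ^ (k - 1 - M))).image f)
      ⊆ {c : Fin n → ZMod 2 | c ∈ SCode k n ∧ hammingNorm c = w} := by
    intro c hc
    simp only [coe_image, Set.mem_image, mem_coe, mem_range] at hc
    obtain ⟨h0, _, rfl⟩ := hc
    refine ⟨cword_mem k n _, ?_⟩
    rw [show f h0 = cword k n (2 ^ (M+1) * h0 + 2 ^ (M-1)) from rfl, hammingNorm_cword,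
      weight_count k M s h0 hM hMk hs1 hs2]
  calc (2:ℕ) ^ (k - 1 - M) = ((range (2 ^ (k - 1 - M))).image f).card := by
        rw [Finset.card_image_of_injOn hinj, Finset.card_range]
    _ = (↑((range (2 ^ (k - 1 - M))).image f) : Set (Fin n → ZMod 2)).ncard := by
        rw [Set.ncard_coe_finset]
    _ ≤ _ := Set.ncard_le_ncard hsub (Set.toFinite _)

lemma hasDeriv_f (u : ℝ) (h1 : 1 - u ≠ 0) (h2 : 1 + u ≠ 0) :
    HasDerivAt (fun u : ℝ => (1-u) * Real.log (1-u) + (1+u) * Real.log (1+u) - u^2)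
      (Real.log (1+u) - Real.log (1-u) - 2*u) u := by
  have d1 : HasDerivAt (fun u : ℝ => 1 - u) (-1) u := by
    simpa using (hasDerivAt_id u).const_sub 1
  have d2 : HasDerivAt (fun u : ℝ => 1 + u) 1 u := by
    simpa using (hasDerivAt_id u).const_add 1
  have l1 : HasDerivAt (fun u : ℝ => Real.log (1-u)) (-1/(1-u)) u := d1.log h1
  have l2 : HasDerivAt (fun u : ℝ => Real.log (1+u)) (1/(1+u)) u := d2.log h2
  have m1 : HasDerivAt (fun u : ℝ => (1-u) * Real.log (1-u))
      ((-1) * Real.log (1-u) + (1-u) * (-1/(1-u))) u := d1.mul l1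
  have m2 : HasDerivAt (fun u : ℝ => (1+u) * Real.log (1+u))
      (1 * Real.log (1+u) + (1+u) * (1/(1+u))) u := d2.mul l2
  have sq : HasDerivAt (fun u : ℝ => u^2) (2*u) u := by
    simpa using (hasDerivAt_pow 2 u)
  have := (m1.add m2).sub sq
  refine this.congr_deriv ?_
  field_simp
  ring

lemma hasDeriv_g (u : ℝ) (h1 : 1 - u ≠ 0) (h2 : 1 + u ≠ 0) :
    HasDerivAt (fun u : ℝ => Real.log (1+u) - Real.log (1-u) - 2*u)
      (1/(1+u) + 1/(1-u) - 2) u := by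
  have d1 : HasDerivAt (fun u : ℝ => 1 - u) (-1) u := by
    simpa using (hasDerivAt_id u).const_sub 1
  have d2 : HasDerivAt (fun u : ℝ => 1 + u) 1 u := by
    simpa using (hasDerivAt_id u).const_add 1
  have l1 : HasDerivAt (fun u : ℝ => Real.log (1-u)) (-1/(1-u)) u := d1.log h1
  have l2 : HasDerivAt (fun u : ℝ => Real.log (1+u)) (1/(1+u)) u := d2.log h2
  have lin : HasDerivAt (fun u : ℝ => 2*u) 2 u := by
    simpa using (hasDerivAt_id u).const_mul 2
  have := (l2.sub l1).sub lin
  refine this.congr_deriv ?_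
  ring

lemma ne_lemmas {u : ℝ} (h0 : 0 ≤ u) (h1 : u ≤ 1/2) : 1 - u ≠ 0 ∧ 1 + u ≠ 0 := by
  constructor <;> intro h <;> nlinarith

lemma g_nonneg {u : ℝ} (h0 : 0 ≤ u) (h1 : u ≤ 1/2) :
    0 ≤ Real.log (1+u) - Real.log (1-u) - 2*u := by
  set g : ℝ → ℝ := fun u => Real.log (1+u) - Real.log (1-u) - 2*u with hg
  have hmono : MonotoneOn g (Set.Icc 0 (1/2)) := by
    apply monotoneOn_of_deriv_nonneg (convex_Icc 0 (1/2))
    · intro x hx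
      simp only [Set.mem_Icc] at hx
      obtain ⟨hn1, hn2⟩ := ne_lemmas hx.1 hx.2
      exact (hasDeriv_g x hn1 hn2).continuousAt.continuousWithinAt
    · intro x hx
      rw [interior_Icc] at hx
      simp only [Set.mem_Ioo] at hx
      obtain ⟨hn1, hn2⟩ := ne_lemmas hx.1.le hx.2.le
      exact (hasDeriv_g x hn1 hn2).differentiableAt.differentiableWithinAt
    · intro x hx
      rw [interior_Icc] at hx
      simp only [Set.mem_Ioo] at hx
      obtain ⟨hn1, hn2⟩ := ne_lemmas hx.1.le hx.2.le
      rw [(hasDeriv_g x hn1 hn2).deriv]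
      have hx1 : (0:ℝ) < 1 + x := by linarith
      have hx2 : (0:ℝ) < 1 - x := by nlinarith
      have hkey : 1/(1+x) + 1/(1-x) - 2 = 2*x^2/((1+x)*(1-x)) := by
        field_simp
        ring
      rw [hkey]
      positivity
  have h00 : g 0 = 0 := by simp [hg]
  have := hmono (Set.mem_Icc.mpr ⟨le_refl 0, by norm_num⟩) (Set.mem_Icc.mpr ⟨h0, h1⟩) h0
  rw [h00] at this
  exact this

lemma phi_ge_sq {u : ℝ} (h0 : 0 ≤ u) (h1 : u ≤ 1/2) :
    u^2 ≤ (1-u) * Real.log (1-u) + (1+u) * Real.log (1+u) := by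
  set f : ℝ → ℝ := fun u => (1-u) * Real.log (1-u) + (1+u) * Real.log (1+u) - u^2 with hf
  have hmono : MonotoneOn f (Set.Icc 0 (1/2)) := by
    apply monotoneOn_of_deriv_nonneg (convex_Icc 0 (1/2))
    · intro x hx
      simp only [Set.mem_Icc] at hx
      obtain ⟨hn1, hn2⟩ := ne_lemmas hx.1 hx.2
      exact (hasDeriv_f x hn1 hn2).continuousAt.continuousWithinAt
    · intro x hx
      rw [interior_Icc] at hx
      simp only [Set.mem_Ioo] at hx
      obtain ⟨hn1, hn2⟩ := ne_lemmas hx.1.le hx.2.le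
      exact (hasDeriv_f x hn1 hn2).differentiableAt.differentiableWithinAt
    · intro x hx
      rw [interior_Icc] at hx
      simp only [Set.mem_Ioo] at hx
      obtain ⟨hn1, hn2⟩ := ne_lemmas hx.1.le hx.2.le
      rw [(hasDeriv_f x hn1 hn2).deriv]
      exact g_nonneg hx.1.le hx.2.le
  have h00 : f 0 = 0 := by simp [hf]
  have := hmono (Set.mem_Icc.mpr ⟨le_refl 0, by norm_num⟩) (Set.mem_Icc.mpr ⟨h0, h1⟩) h0
  rw [h00] at this
  simp only [hf] at this
  linarith

lemma Pue_single_le {n : ℕ} (C : Submodule (ZMod 2) (Fin n → ZMod 2)) {p : ℝ}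
    (hp0 : 0 ≤ p) (hp1 : p ≤ 1) {w : ℕ} (hw : w ∈ Finset.Icc 1 n) :
    (numWt C w : ℝ) * p ^ w * (1 - p) ^ (n - w) ≤ Pue C p := by
  apply Finset.single_le_sum _ hw
  intro i _
  have h1p : 0 ≤ 1 - p := by linarith
  positivity

lemma NEC (k M s : ℕ) (hM : 1 ≤ M) (hMk : M + 2 ≤ k) (hs1 : 1 ≤ s) (hs2 : s ≤ 2 ^ M)
    (hsat : IsSatisfactory k (SCode k (2 ^ k - 2 ^ (M+1) + s))) :
    ((min s (2 ^ M - s) : ℕ) : ℝ) ≤ Real.sqrt (2 * (M+1) * 2 ^ k * Real.log 2) := by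
  set n := 2 ^ k - 2 ^ (M+1) + s with hn
  set D := min s (2 ^ M - s) with hD
  set w := 2 ^ (k-1) - 2 ^ M + (s - 2 ^ (M-1)) with hw
  -- nat facts
  have e1 : (2:ℕ) ^ (M+1) = 2 * 2 ^ M := by ring
  have e2 : (2:ℕ) ^ M = 2 * 2 ^ (M-1) := by
    conv_lhs => rw [← Nat.sub_add_cancel hM]
    rw [pow_succ]; ring
  have e3 : (2:ℕ) ^ k = 2 * 2 ^ (k-1) := by
    conv_lhs => rw [← Nat.sub_add_cancel (show 1 ≤ k by omega)]
    rw [pow_succ]; ring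
  have e4 : (2:ℕ) ^ (M+1) ≤ 2 ^ (k-1) := Nat.pow_le_pow_right (by norm_num) (by omega)
  have e5 : (1:ℕ) ≤ 2 ^ (M-1) := Nat.one_le_two_pow
  have h2w : 2 * w + D = n := by omega
  have h1w : 1 ≤ w := by omega
  have hwn : w ≤ n := by omega
  have h2D : 2 * D ≤ n := by omega
  have hn0 : 0 < n := by omega
  have hn2k : n ≤ 2 ^ k := by omega
  -- real setup
  have hnR : (0:ℝ) < (n:ℝ) := by exact_mod_cast hn0
  set u : ℝ := (D:ℝ) / (n:ℝ) with hu
  have hu0 : 0 ≤ u := by positivity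
  have hu2 : u ≤ 1/2 := by
    rw [hu, div_le_iff₀ hnR]
    have : (2:ℝ) * (D:ℝ) ≤ (n:ℝ) := by exact_mod_cast h2D
    linarith
  set p : ℝ := (1 - u)/2 with hp
  have hp0 : 0 ≤ p := by rw [hp]; linarith
  have hp12 : p ≤ 1/2 := by rw [hp]; linarith
  have hp1 : p ≤ 1 := by linarith
  have h1p : (1:ℝ) - p = (1 + u)/2 := by rw [hp]; ring
  -- apply satisfaction at p
  have hPue := hsat p (Set.mem_Icc.mpr ⟨hp0, hp12⟩)
  have hterm := Pue_single_le (SCode k n) hp0 hp1 (Finset.mem_Icc.mpr ⟨h1w, hwn⟩)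
  have hnum := numWt_ge k M s hM hMk hs1 hs2
  have hnumR : ((2:ℝ) ^ (k-1-M)) ≤ (numWt (SCode k n) w : ℝ) := by
    exact_mod_cast Nat.cast_le.mpr hnum
  have hpw : (0:ℝ) ≤ p ^ w * (1-p) ^ (n-w) := by
    have : (0:ℝ) ≤ 1 - p := by linarith
    positivity
  have hchain : (2:ℝ) ^ (k-1-M) * (p ^ w * (1-p) ^ (n-w)) ≤ (2:ℝ) ^ ((k:ℤ) - (n:ℤ)) := by
    calc (2:ℝ) ^ (k-1-M) * (p ^ w * (1-p) ^ (n-w))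
        ≤ (numWt (SCode k n) w : ℝ) * (p ^ w * (1-p) ^ (n-w)) :=
          mul_le_mul_of_nonneg_right hnumR hpw
      _ = (numWt (SCode k n) w : ℝ) * p ^ w * (1-p) ^ (n-w) := by ring
      _ ≤ Pue (SCode k n) p := hterm
      _ ≤ _ := hPue
  have hzpow : (2:ℝ) ^ ((k:ℤ) - (n:ℤ)) = (2:ℝ) ^ k / (2:ℝ) ^ n := by
    rw [zpow_sub₀ (by norm_num : (2:ℝ) ≠ 0), zpow_natCast, zpow_natCast]
  -- clear the 2^n denominators
  have hX : p ^ w * (1-p) ^ (n-w) = (1-u) ^ w * (1+u) ^ (n-w) / 2 ^ n := by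
    rw [hp, h1p] at *
    rw [div_pow, div_pow, div_mul_div_comm, ← pow_add]
    congr 2
    omega
  have h1u : (0:ℝ) < 1 - u := by linarith
  have h1u' : (0:ℝ) < 1 + u := by linarith
  have hXle : (1-u) ^ w * (1+u) ^ (n-w) ≤ 2 ^ (M+1) := by
    have h2n : (0:ℝ) < 2 ^ n := by positivity
    rw [hX, hzpow] at hchain
    have := (div_le_div_iff_of_pos_right h2n).mp (by
      calc (1-u) ^ w * (1+u) ^ (n-w) * (2:ℝ)^(k-1-M) / 2 ^ n
          = (2:ℝ) ^ (k-1-M) * ((1-u) ^ w * (1+u) ^ (n-w) / 2 ^ n) := by ring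
        _ ≤ (2:ℝ) ^ k / 2 ^ n := hchain)
    have hkk : (2:ℝ) ^ k = 2 ^ (k-1-M) * 2 ^ (M+1) := by
      rw [← pow_add]
      congr 1
      omega
    have h2km : (0:ℝ) < 2 ^ (k-1-M) := by positivity
    nlinarith [this]
  -- take logs
  have hlog : (w:ℝ) * Real.log (1-u) + ((n:ℝ) - (w:ℝ)) * Real.log (1+u)
      ≤ (M+1) * Real.log 2 := by
    have hXpos : (0:ℝ) < (1-u) ^ w * (1+u) ^ (n-w) := by positivity
    have := Real.log_le_log hXpos hXle
    rw [Real.log_mul (by positivity) (by positivity), Real.log_pow, Real.log_pow,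
      Real.log_pow] at this
    have hnw : ((n - w : ℕ) : ℝ) = (n:ℝ) - (w:ℝ) := by
      exact Nat.cast_sub hwn
    rw [hnw] at this
    exact_mod_cast this
  -- identity and phi bound
  have hwreal : (w:ℝ) = (n:ℝ) * (1 - u) / 2 := by
    have h2wR : 2 * (w:ℝ) + (D:ℝ) = (n:ℝ) := by exact_mod_cast h2w
    have hDR : (D:ℝ) = (n:ℝ) * u := by
      rw [hu]; field_simp
    rw [hDR] at h2wR
    linarith
  have hid : (w:ℝ) * Real.log (1-u) + ((n:ℝ) - (w:ℝ)) * Real.log (1+u)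
      = ((n:ℝ)/2) * ((1-u) * Real.log (1-u) + (1+u) * Real.log (1+u)) := by
    rw [hwreal]; ring
  have hphi := phi_ge_sq hu0 hu2
  have hfinal : ((n:ℝ)/2) * u^2 ≤ (M+1) * Real.log 2 := by
    rw [hid] at hlog
    have : ((n:ℝ)/2) * u^2 ≤ ((n:ℝ)/2) * ((1-u) * Real.log (1-u) + (1+u) * Real.log (1+u)) := by
      apply mul_le_mul_of_nonneg_left hphi
      positivity
    linarith
  -- conclude
  have hDsq : ((D:ℝ))^2 ≤ 2 * (M+1) * 2 ^ k * Real.log 2 := by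
    have hDR : (D:ℝ) = (n:ℝ) * u := by rw [hu]; field_simp
    have h1 : ((n:ℝ)/2) * u^2 = (D:ℝ)^2 / (2 * n) := by
      rw [hDR]; field_simp
    rw [h1] at hfinal
    have hlog2 : (0:ℝ) < Real.log 2 := Real.log_pos (by norm_num)
    have hnk : (n:ℝ) ≤ 2 ^ k := by exact_mod_cast hn2k
    have := (div_le_iff₀ (by positivity : (0:ℝ) < 2 * n)).mp hfinal
    calc ((D:ℝ))^2 ≤ (M+1) * Real.log 2 * (2 * n) := this
      _ ≤ (M+1) * Real.log 2 * (2 * 2 ^ k) := by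
          apply mul_le_mul_of_nonneg_left (by linarith) (by positivity)
      _ = 2 * (M+1) * 2 ^ k * Real.log 2 := by ring
  have hD0 : (0:ℝ) ≤ (D:ℝ) := by positivity
  calc ((D:ℕ):ℝ) = Real.sqrt (((D:ℝ))^2) := by rw [Real.sqrt_sq hD0]
    _ ≤ _ := Real.sqrt_le_sqrt hDsq

lemma le_of_sq_le_sq' {a b : ℝ} (ha : 0 ≤ a) (hb : 0 ≤ b) (h : a^2 ≤ b^2) : a ≤ b := by
  calc a = Real.sqrt (a^2) := (Real.sqrt_sq ha).symm
    _ ≤ Real.sqrt (b^2) := Real.sqrt_le_sqrt h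
    _ = b := Real.sqrt_sq hb

lemma sqrt_tele (j : ℕ) :
    Real.sqrt j ≤ 2/3 * ((Real.sqrt ((j:ℝ)+1))^3 - (Real.sqrt j)^3) := by
  set r := Real.sqrt (j:ℝ) with hr
  set b := Real.sqrt ((j:ℝ)+1) with hb
  have hj0 : (0:ℝ) ≤ (j:ℝ) := Nat.cast_nonneg j
  have hr0 : 0 ≤ r := Real.sqrt_nonneg _
  have hb0 : 0 ≤ b := Real.sqrt_nonneg _
  have hr2 : r^2 = (j:ℝ) := Real.sq_sqrt hj0
  have hb2 : b^2 = (j:ℝ)+1 := Real.sq_sqrt (by linarith)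
  have key : (3/2)*r + r^3 ≤ b^3 := by
    apply le_of_sq_le_sq' (by positivity) (by positivity)
    have e1 : ((3/2)*r + r^3)^2 = (9/4)*(r^2) + 3*(r^2)^2 + (r^2)^3 := by ring
    have e2 : (b^3)^2 = (b^2)^3 := by ring
    rw [e1, e2, hr2, hb2]
    nlinarith [hj0, sq_nonneg (j:ℝ)]
  linarith

lemma sum_sqrt_Ico (a : ℕ) : ∀ b : ℕ, a ≤ b →
    ∑ j ∈ Finset.Ico a b, Real.sqrt j
      ≤ 2/3 * ((Real.sqrt b)^3 - (Real.sqrt a)^3) := by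
  intro b
  induction b with
  | zero => intro h; interval_cases a; simp
  | succ b ih =>
    intro hab
    rcases Nat.lt_or_ge a (b+1) with h | h
    · have hab' : a ≤ b := by omega
      rw [Finset.sum_Ico_succ_top hab']
      have h2 := sqrt_tele b
      have h3 : ((b:ℝ)+1) = ((b+1 : ℕ):ℝ) := by push_cast; ring
      rw [h3] at h2
      have := ih hab'
      linarith
    · have : a = b + 1 := by omega
      subst this
      simp

lemma geo_sum : ∀ m : ℕ, 1 ≤ m → ∑ M ∈ Finset.Ico 1 m, 2^M = 2^m - 2 := by
  intro m
  induction m with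
  | zero => omega
  | succ m ih =>
    intro _
    rcases Nat.eq_zero_or_pos m with h | h
    · subst h; simp
    · rw [Finset.sum_Ico_succ_top h, ih h]
      have h1 : (2:ℕ)^(m+1) = 2 * 2^m := by ring
      have h2 : (2:ℕ) ≤ 2^m := by
        calc (2:ℕ) = 2^1 := rfl
          _ ≤ 2^m := Nat.pow_le_pow_right (by norm_num) h
      omega

lemma rpow_nat_div2 (m : ℕ) : (2:ℝ) ^ ((m:ℝ)/2) = Real.sqrt ((2:ℝ) ^ m) := by
  rw [Real.sqrt_eq_rpow, ← Real.rpow_natCast 2 m, ← Real.rpow_mul (by norm_num)]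
  ring_nf

lemma sqrt_log2_ge : (4/5 : ℝ) ≤ Real.sqrt (Real.log 2) := by
  have h1 : (16/25 : ℝ) ≤ Real.log 2 := by
    have := Real.log_two_gt_d9
    linarith
  calc (4/5 : ℝ) = Real.sqrt ((4/5)^2) := by
        rw [Real.sqrt_sq (by norm_num)]
    _ ≤ Real.sqrt (Real.log 2) := Real.sqrt_le_sqrt (by norm_num; linarith)

set_option maxHeartbeats 2000000 in
/-- The number `N_k` of `n ∈ [2^(k-1), 2^k - 1]` for which
`S_{n,k}` is satisfactory obeys `N_k < k + (2^((k+5)/2)/3)·√(k³ ln 2)`. -/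
theorem stmt16 (k : ℕ) (hk : 2 ≤ k) :
    ((Set.ncard {n : ℕ | 2 ^ (k - 1) ≤ n ∧ n ≤ 2 ^ k - 1 ∧
        IsSatisfactory k (SCode k n)} : ℕ) : ℝ) <
      (k : ℝ) + (2 : ℝ) ^ (((k : ℝ) + 5) / 2) / 3 *
        Real.sqrt ((k : ℝ) ^ 3 * Real.log 2) := by
  classical
  -- Finset representation of the set
  set F : Finset ℕ := (Finset.Icc (2^(k-1)) (2^k - 1)).filter
    (fun n => IsSatisfactory k (SCode k n)) with hF
  have hset : {n : ℕ | 2 ^ (k - 1) ≤ n ∧ n ≤ 2 ^ k - 1 ∧ IsSatisfactory k (SCode k n)} = ↑F := by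
    ext n
    simp only [hF, Finset.coe_filter, Set.mem_setOf_eq, Finset.mem_Icc]
    tauto
  rw [hset, Set.ncard_coe_finset]
  -- real abbreviations
  set X : ℝ := Real.sqrt ((2:ℝ)^(k+1)) with hX
  set c₀ : ℝ := Real.sqrt (2 * 2^k * Real.log 2) with hc₀
  have hlog2pos : (0:ℝ) < Real.log 2 := Real.log_pos (by norm_num)
  have hX0 : 0 ≤ X := Real.sqrt_nonneg _
  have hX2 : X^2 = (2:ℝ)^(k+1) := Real.sq_sqrt (by positivity)
  have hX1 : (1:ℝ) ≤ X := by
    rw [hX]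
    calc (1:ℝ) = Real.sqrt 1 := by rw [Real.sqrt_one]
      _ ≤ _ := Real.sqrt_le_sqrt (one_le_pow₀ (by norm_num))
  have hc00 : 0 ≤ c₀ := Real.sqrt_nonneg _
  have hc0X : (4/5) * X ≤ c₀ := by
    rw [hc₀, hX]
    have he : 2 * (2:ℝ)^k * Real.log 2 = (2:ℝ)^(k+1) * Real.log 2 := by ring
    rw [he, Real.sqrt_mul (by positivity)]
    have := sqrt_log2_ge
    nlinarith [Real.sqrt_nonneg ((2:ℝ)^(k+1))]
  -- the tail identity
  have htail : (2 : ℝ) ^ (((k : ℝ) + 5) / 2) / 3 * Real.sqrt ((k : ℝ) ^ 3 * Real.log 2)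
      = (4/3) * c₀ * (Real.sqrt k)^3 := by
    have h1 : ((k : ℝ) + 5) = ((k + 5 : ℕ) : ℝ) := by push_cast; ring
    rw [h1, rpow_nat_div2 (k+5)]
    have h2 : Real.sqrt ((k : ℝ)^3 * Real.log 2)
        = Real.sqrt ((k : ℝ)^3) * Real.sqrt (Real.log 2) := Real.sqrt_mul (by positivity) _
    have h3 : Real.sqrt ((k : ℝ)^3) = (Real.sqrt k)^3 := by
      have : ((Real.sqrt k)^3)^2 = (k:ℝ)^3 := by
        have hs : (Real.sqrt k)^2 = (k:ℝ) := Real.sq_sqrt (Nat.cast_nonneg k)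
        calc ((Real.sqrt k)^3)^2 = ((Real.sqrt k)^2)^3 := by ring
          _ = (k:ℝ)^3 := by rw [hs]
      rw [← this, Real.sqrt_sq (by positivity)]
    have h4 : Real.sqrt ((2:ℝ)^(k+5)) = 4 * Real.sqrt (2 * 2^k) := by
      have he : (2:ℝ)^(k+5) = 16 * (2 * 2^k) := by rw [pow_add]; ring
      rw [he, Real.sqrt_mul (by norm_num), show (16:ℝ) = 4^2 by norm_num,
        Real.sqrt_sq (by norm_num)]
    have h5 : Real.sqrt (2 * (2:ℝ)^k) * Real.sqrt (Real.log 2) = c₀ := by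
      rw [hc₀, ← Real.sqrt_mul (by positivity)]
    rw [h2, h3, h4]
    rw [show 4 * Real.sqrt (2 * 2^k) / 3 * ((Real.sqrt k)^3 * Real.sqrt (Real.log 2))
      = (4/3) * (Real.sqrt (2 * (2:ℝ)^k) * Real.sqrt (Real.log 2)) * (Real.sqrt k)^3 by ring, h5]
  rw [htail]
  -- cube of sqrt k bound
  have hsqk : 2 * Real.sqrt 2 ≤ (Real.sqrt k)^3 := by
    have h2k : Real.sqrt 2 ≤ Real.sqrt k := Real.sqrt_le_sqrt (by exact_mod_cast hk)
    have hs2 : (Real.sqrt 2)^2 = 2 := Real.sq_sqrt (by norm_num)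
    have hs20 : 0 ≤ Real.sqrt 2 := Real.sqrt_nonneg _
    calc 2 * Real.sqrt 2 = (Real.sqrt 2)^3 := by nlinarith
      _ ≤ (Real.sqrt k)^3 := pow_le_pow_left₀ hs20 h2k 3
  have hsqrt2_32 : Real.sqrt 2 ≤ 3/2 := by
    apply le_of_sq_le_sq' (Real.sqrt_nonneg _) (by norm_num)
    rw [Real.sq_sqrt (by norm_num)]; norm_num
  -- pow facts
  have hpow : ∀ a b : ℕ, a ≤ b → (2:ℕ)^a ≤ 2^b :=
    fun a b h => Nat.pow_le_pow_right (by norm_num) h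
  have hek : (2:ℕ)^k = 2*2^(k-1) := by
    conv_lhs => rw [← Nat.sub_add_cancel (show 1 ≤ k by omega)]
    rw [pow_succ]; ring
  have h1k : (1:ℕ) ≤ 2^(k-1) := Nat.one_le_two_pow
  -- main branch on size of k
  rcases Nat.lt_or_ge k 7 with hk7 | hk7
  · -- small k: trivial bound F.card ≤ 2^(k-1)
    have hN : F.card ≤ 2^(k-1) := by
      calc F.card ≤ (Finset.Icc (2^(k-1)) (2^k - 1)).card := Finset.card_le_card (Finset.filter_subset _ _)
        _ = 2^(k-1) := by rw [Nat.card_Icc]; omega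
    have hNR : (F.card : ℝ) ≤ 2 * Real.sqrt 2 * X := by
      have h1 : (F.card : ℝ) ≤ ((2:ℕ)^(k-1) : ℝ) := by exact_mod_cast hN
      have h2 : ((2:ℕ)^(k-1) : ℝ) = (2:ℝ)^(k-1) := by push_cast; ring
      have h3 : (2:ℝ)^(k-1) ≤ 2 * Real.sqrt 2 * X := by
        apply le_of_sq_le_sq' (by positivity) (by positivity)
        have hs2 : (Real.sqrt 2)^2 = 2 := Real.sq_sqrt (by norm_num)
        have e1 : ((2:ℝ)^(k-1))^2 = 2^(2*(k-1)) := by rw [← pow_mul]; ring_nf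
        have e2 : (2 * Real.sqrt 2 * X)^2 = 8 * 2^(k+1) := by
          rw [mul_pow, mul_pow, hs2, hX2]; norm_num
        rw [e1, e2, show (8:ℝ) * 2^(k+1) = 2^(k+4) by rw [pow_add]; ring]
        exact pow_le_pow_right₀ (by norm_num) (by omega)
      linarith [h1, h2 ▸ h1]
    have hcube : (4/3) * c₀ * (Real.sqrt k)^3 ≥ (4/3) * ((4/5)*X) * (2*Real.sqrt 2) := by
      have t1 : c₀ * (Real.sqrt k)^3 ≥ ((4/5)*X) * (2*Real.sqrt 2) := by
        have := mul_le_mul hc0X hsqk (by positivity) hc00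
        linarith [this]
      linarith
    have hs20 : (0:ℝ) < Real.sqrt 2 := Real.sqrt_pos.mpr (by norm_num)
    have hkpos : (0:ℝ) < k := by positivity
    nlinarith [hNR, hcube, mul_pos hs20 (lt_of_lt_of_le one_pos hX1)]
  · -- large k
    set b : ℕ → ℕ := fun M => ⌊Real.sqrt (2*((M:ℝ)+1)*2^k*Real.log 2)⌋₊ with hb
    -- covering bound
    have hper : ∀ M, 1 ≤ M → M ≤ k-2 →
        (F.filter (fun n => 2^k - 2^(M+1) < n ∧ n ≤ 2^k - 2^M)).card
          ≤ min (2^M) (2*(b M)+1) := by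
      intro M hM1 hM2
      have hA : (2:ℕ)^(M+1) ≤ 2^(k-1) := hpow _ _ (by omega)
      have heM : (2:ℕ)^(M+1) = 2*2^M := by ring
      have h1M : (1:ℕ) ≤ 2^M := Nat.one_le_two_pow
      apply Nat.le_min.mpr
      constructor
      · refine le_trans (Finset.card_le_card
            (t := Finset.Ioc (2^k - 2^(M+1)) (2^k - 2^M)) ?_) (le_of_eq ?_)
        · intro n hn
          simp only [Finset.mem_filter] at hn
          simpa only [Finset.mem_Ioc] using hn.2
        · rw [Nat.card_Ioc]; omega
      · have hsub : F.filter (fun n => 2^k - 2^(M+1) < n ∧ n ≤ 2^k - 2^M)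
            ⊆ (Finset.Ioc (2^k - 2^(M+1)) (2^k - 2^(M+1) + b M))
              ∪ (Finset.Icc (2^k - 2^M - b M) (2^k - 2^M)) := by
          intro n hn
          simp only [Finset.mem_filter, hF, Finset.mem_Icc] at hn
          obtain ⟨⟨_, hsat⟩, hblock⟩ := hn
          obtain ⟨s, hs1, hs2, rfl⟩ : ∃ s, 1 ≤ s ∧ s ≤ 2^M ∧ n = 2^k - 2^(M+1) + s :=
            ⟨n - (2^k - 2^(M+1)), by omega, by omega, by omega⟩
          have hnec := NEC k M s hM1 (by omega) hs1 hs2 hsat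
          have hmin : min s (2^M - s) ≤ b M := Nat.le_floor hnec
          simp only [Finset.mem_union, Finset.mem_Ioc, Finset.mem_Icc]
          omega
        refine le_trans (Finset.card_le_card hsub) (le_trans (Finset.card_union_le _ _) ?_)
        rw [Nat.card_Ioc, Nat.card_Icc]
        omega
    have hcover : F ⊆ insert (2^(k-1)) (insert (2^k - 1)
        ((Finset.Icc 1 (k-2)).biUnion (fun M =>
          F.filter (fun n => 2^k - 2^(M+1) < n ∧ n ≤ 2^k - 2^M)))) := by
      intro n hn
      have hn' := hn
      simp only [hF, Finset.mem_filter, Finset.mem_Icc] at hn'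
      obtain ⟨⟨hn1, hn2⟩, _⟩ := hn'
      simp only [Finset.mem_insert, Finset.mem_biUnion, Finset.mem_Icc]
      by_cases h1 : n = 2^(k-1)
      · left; exact h1
      right
      by_cases h2 : n = 2^k - 1
      · left; exact h2
      right
      set g := 2^k - n with hg
      have hg2 : 2 ≤ g := by omega
      have hgk : g < 2^(k-1) := by omega
      set M := Nat.log2 g with hM
      have hglow : 2^M ≤ g := by
        rw [hM, Nat.log2_eq_log_two]
        exact Nat.pow_log_le_self 2 (by omega)
      have hghigh : g < 2^(M+1) := by
        rw [hM, Nat.log2_eq_log_two]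
        exact Nat.lt_pow_succ_log_self (by norm_num) g
      have hM1 : 1 ≤ M := by
        rcases Nat.eq_zero_or_pos M with h | h
        · rw [h] at hghigh; norm_num at hghigh; omega
        · exact h
      have hM2 : M ≤ k - 2 := by
        by_contra hcon
        have : k - 1 ≤ M := by omega
        have := hpow (k-1) M this
        omega
      refine ⟨M, ⟨hM1, hM2⟩, ?_⟩
      rw [Finset.mem_filter]
      exact ⟨hn, by omega, by omega⟩
    have hmain : F.card ≤ 2 + ∑ M ∈ Finset.Icc 1 (k-2), min (2^M) (2*(b M)+1) := by
      set S := (Finset.Icc 1 (k-2)).biUnion (fun M =>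
        F.filter (fun n => 2^k - 2^(M+1) < n ∧ n ≤ 2^k - 2^M)) with hS
      have h1 : F.card ≤ (insert (2^(k-1)) (insert (2^k - 1) S)).card :=
        Finset.card_le_card hcover
      have h2 : (insert (2^(k-1)) (insert (2^k - 1) S)).card
          ≤ (insert (2^k - 1) S).card + 1 := Finset.card_insert_le _ _
      have h3 : (insert (2^k - 1) S).card ≤ S.card + 1 := Finset.card_insert_le _ _
      have h4 : S.card ≤ ∑ M ∈ Finset.Icc 1 (k-2),
          (F.filter (fun n => 2^k - 2^(M+1) < n ∧ n ≤ 2^k - 2^M)).card :=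
        Finset.card_biUnion_le
      have h5 : ∑ M ∈ Finset.Icc 1 (k-2),
            (F.filter (fun n => 2^k - 2^(M+1) < n ∧ n ≤ 2^k - 2^M)).card
          ≤ ∑ M ∈ Finset.Icc 1 (k-2), min (2^M) (2*(b M)+1) :=
        Finset.sum_le_sum (fun M hM => by
          simp only [Finset.mem_Icc] at hM
          exact hper M hM.1 hM.2)
      omega
    -- split the sum at m₀
    set m₀ := k/2 + 2 with hm₀
    have hm₀1 : 1 ≤ m₀ := by omega
    have hm₀2 : m₀ ≤ k - 2 := by omega
    have hm₀3 : 2*m₀ ≤ k + 4 := by omega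
    have hsplit : ∑ M ∈ Finset.Icc 1 (k-2), min (2^M) (2*(b M)+1)
        ≤ (2^m₀ - 2) + ∑ M ∈ Finset.Ico m₀ (k-1), (2*(b M)+1) := by
      have hIccIco : Finset.Icc 1 (k-2) = Finset.Ico 1 (k-1) := by
        rw [← Finset.Ico_add_one_right_eq_Icc]
        congr 1
        omega
      rw [hIccIco, ← Finset.sum_Ico_consecutive _ (show 1 ≤ m₀ by omega) (show m₀ ≤ k-1 by omega)]
      apply add_le_add
      · calc ∑ M ∈ Finset.Ico 1 m₀, min (2^M) (2*(b M)+1)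
            ≤ ∑ M ∈ Finset.Ico 1 m₀, 2^M :=
              Finset.sum_le_sum (fun M _ => Nat.min_le_left _ _)
          _ = 2^m₀ - 2 := geo_sum m₀ (by omega)
      · exact Finset.sum_le_sum (fun M _ => Nat.min_le_right _ _)
    have hsum2 : ∑ M ∈ Finset.Ico m₀ (k-1), (2*(b M)+1)
        = 2 * (∑ M ∈ Finset.Ico m₀ (k-1), b M) + (k-1-m₀) := by
      rw [Finset.sum_add_distrib, Finset.sum_const, Nat.card_Ico, ← Finset.mul_sum]
      simp [mul_comm]
    -- real-valued estimates
    have hbMR : ∀ M ∈ Finset.Ico m₀ (k-1), (b M : ℝ) ≤ Real.sqrt ((M:ℝ)+1) * c₀ := by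
      intro M _
      have h1 : (b M : ℝ) ≤ Real.sqrt (2*((M:ℝ)+1)*2^k*Real.log 2) :=
        Nat.floor_le (Real.sqrt_nonneg _)
      have h2 : 2*((M:ℝ)+1)*2^k*Real.log 2 = ((M:ℝ)+1) * (2*2^k*Real.log 2) := by ring
      rw [h2, Real.sqrt_mul (by positivity)] at h1
      exact h1
    have hre : ∑ M ∈ Finset.Ico m₀ (k-1), Real.sqrt ((M:ℝ)+1)
        = ∑ j ∈ Finset.Ico (m₀+1) k, Real.sqrt (j:ℝ) := by
      rw [Finset.sum_Ico_eq_sum_range, Finset.sum_Ico_eq_sum_range]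
      have he : k - (m₀+1) = k - 1 - m₀ := by omega
      rw [he]
      apply Finset.sum_congr rfl
      intro i _
      congr 1
      push_cast
      ring
    have hsumsq := sum_sqrt_Ico (m₀+1) k (by omega)
    have hbsum : ∑ M ∈ Finset.Ico m₀ (k-1), (b M : ℝ)
        ≤ c₀ * (2/3 * ((Real.sqrt k)^3 - (Real.sqrt ((m₀:ℝ)+1))^3)) := by
      calc ∑ M ∈ Finset.Ico m₀ (k-1), (b M : ℝ)
          ≤ ∑ M ∈ Finset.Ico m₀ (k-1), Real.sqrt ((M:ℝ)+1) * c₀ :=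
            Finset.sum_le_sum hbMR
        _ = c₀ * ∑ M ∈ Finset.Ico m₀ (k-1), Real.sqrt ((M:ℝ)+1) := by
            rw [← Finset.sum_mul]; ring
        _ = c₀ * ∑ j ∈ Finset.Ico (m₀+1) k, Real.sqrt (j:ℝ) := by rw [hre]
        _ ≤ c₀ * (2/3 * ((Real.sqrt k)^3 - (Real.sqrt ((m₀:ℝ)+1))^3)) := by
            apply mul_le_mul_of_nonneg_left _ hc00
            have hc : ((m₀+1 : ℕ):ℝ) = (m₀:ℝ)+1 := by push_cast; ring
            rw [← hc]
            exact hsumsq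
    -- cast the counting bound to ℝ
    have hcast : (F.card : ℝ) ≤ 2^m₀ + ((k:ℝ) - 1 - m₀)
        + 2 * ∑ M ∈ Finset.Ico m₀ (k-1), (b M : ℝ) := by
      have hnat : F.card ≤ 2^m₀ + (k-1-m₀) + 2*(∑ M ∈ Finset.Ico m₀ (k-1), b M) := by
        have h2m : (2:ℕ) ≤ 2^m₀ := by
          calc (2:ℕ) = 2^1 := rfl
            _ ≤ 2^m₀ := hpow 1 m₀ (by omega)
        omega
      have := (Nat.cast_le (α := ℝ)).mpr hnat
      push_cast at this
      have hc2 : ((k - 1 - m₀ : ℕ) : ℝ) = (k:ℝ) - 1 - m₀ := by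
        have h1 : ((k - 1 - m₀ : ℕ) : ℝ) + ((m₀ : ℕ):ℝ) + 1 = ((k:ℕ):ℝ) := by
          exact_mod_cast congrArg (Nat.cast (R := ℝ)) (show k - 1 - m₀ + m₀ + 1 = k by omega)
        linarith
      calc (F.card : ℝ) ≤ ((2^m₀ + (k-1-m₀) + 2*(∑ M ∈ Finset.Ico m₀ (k-1), b M) : ℕ) : ℝ) := by
            exact_mod_cast hnat
        _ = 2^m₀ + ((k:ℝ) - 1 - m₀) + 2 * ∑ M ∈ Finset.Ico m₀ (k-1), (b M : ℝ) := by
            push_cast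
            rw [hc2]
    -- final numeric inequality
    have h2m0 : (2:ℝ)^m₀ ≤ 2 * Real.sqrt 2 * X := by
      apply le_of_sq_le_sq' (by positivity) (by positivity)
      have hs2 : (Real.sqrt 2)^2 = 2 := Real.sq_sqrt (by norm_num)
      have e1 : ((2:ℝ)^m₀)^2 = 2^(2*m₀) := by rw [← pow_mul]; ring_nf
      have e2 : (2 * Real.sqrt 2 * X)^2 = 8 * 2^(k+1) := by
        rw [mul_pow, mul_pow, hs2, hX2]; norm_num
      rw [e1, e2, show (8:ℝ) * 2^(k+1) = 2^(k+4) by rw [pow_add]; ring]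
      exact pow_le_pow_right₀ (by norm_num) (by omega)
    have hm06 : (2:ℝ) ≤ Real.sqrt ((m₀:ℝ)+1) := by
      have : (2:ℝ) = Real.sqrt 4 := by
        rw [show (4:ℝ) = 2^2 by norm_num, Real.sqrt_sq (by norm_num)]
      rw [this]
      apply Real.sqrt_le_sqrt
      have : (4:ℕ) ≤ m₀ + 1 := by omega
      exact_mod_cast this
    have hcube8 : (8:ℝ) ≤ (Real.sqrt ((m₀:ℝ)+1))^3 := by
      calc (8:ℝ) = 2^3 := by norm_num
        _ ≤ _ := pow_le_pow_left₀ (by norm_num) hm06 3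
    have hfin : (2:ℝ)^m₀ < (m₀:ℝ) + 1 + (4/3) * c₀ * (Real.sqrt ((m₀:ℝ)+1))^3 := by
      have t1 : (4/3) * c₀ * (Real.sqrt ((m₀:ℝ)+1))^3 ≥ (4/3) * ((4/5)*X) * 8 := by
        have := mul_le_mul hc0X hcube8 (by norm_num) hc00
        nlinarith
      have t2 : 2 * Real.sqrt 2 * X ≤ 3 * X := by nlinarith
      have hXpos : (0:ℝ) < X := by linarith
      nlinarith
    -- combine everything
    have hkcast : ((k:ℝ) - 1 - m₀) + ((m₀:ℝ) + 1) = k := by ring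
    calc (F.card : ℝ)
        ≤ 2^m₀ + ((k:ℝ) - 1 - m₀) + 2 * ∑ M ∈ Finset.Ico m₀ (k-1), (b M : ℝ) := hcast
      _ ≤ 2^m₀ + ((k:ℝ) - 1 - m₀)
          + 2 * (c₀ * (2/3 * ((Real.sqrt k)^3 - (Real.sqrt ((m₀:ℝ)+1))^3))) := by
          linarith [hbsum]
      _ < ((m₀:ℝ) + 1 + (4/3) * c₀ * (Real.sqrt ((m₀:ℝ)+1))^3) + ((k:ℝ) - 1 - m₀)
          + 2 * (c₀ * (2/3 * ((Real.sqrt k)^3 - (Real.sqrt ((m₀:ℝ)+1))^3))) := by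
          linarith [hfin]
      _ = (k:ℝ) + (4/3) * c₀ * (Real.sqrt k)^3 := by ring
end

section
/- Let k ≥ 6 and let t be an integer with 1 ≤ t ≤ 2^{k−6}/((k−1)·ln 2) − 1/4. Then the (generalized) code S_{n,k} with n = 2^{k−3}(4t+1) is ugly (not satisfactory); in particular it is not proper. -/
open Finset

lemma count_period (B q : ℕ) (p : ℕ → Prop) [DecidablePred p] :
    ((range (q * B)).filter (fun j => p (j % B))).card
      = q * ((range B).filter p).card := by
  induction q with
  | zero => simp
  | succ q ih =>
    have h : (q + 1) * B = q * B + B := by ring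
    rw [h, Finset.range_add, Finset.filter_union, Finset.card_union_of_disjoint, ih,
      Finset.filter_map, Finset.card_map]
    · have h2 : ((range B).filter ((fun j => p (j % B)) ∘ ⇑(addLeftEmbedding (q*B))))
          = (range B).filter p := by
        apply Finset.filter_congr
        intro r hr
        simp only [mem_range] at hr
        have hm : (q * B + r) % B = r := by rw [Nat.add_comm, Nat.add_mul_mod_self_right, Nat.mod_eq_of_lt hr]
        simp [addLeftEmbedding_apply, hm]
      rw [h2]; ring
    · apply Finset.disjoint_filter_filter
      rw [Finset.disjoint_left]
      intro a ha hb
      simp only [mem_range] at ha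
      simp only [Finset.mem_map, addLeftEmbedding_apply] at hb
      obtain ⟨r, _, rfl⟩ := hb
      omega

lemma count_bit_base (b : ℕ) :
    ((range (2 ^ (b+1))).filter (fun r => Nat.testBit r b = true)).card = 2 ^ b := by
  have h : ((range (2 ^ (b+1))).filter (fun r => Nat.testBit r b = true))
      = (range (2 ^ (b+1))).filter (fun r => 2 ^ b ≤ r) := by
    apply Finset.filter_congr
    intro r hr
    simp only [mem_range] at hr
    constructor
    · intro hbit
      by_contra hlt
      push_neg at hlt
      rw [Nat.testBit_eq_false_of_lt hlt] at hbit
      exact Bool.false_ne_true hbit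
    · intro hle
      have : r = 2 ^ b + (r - 2 ^ b) := by omega
      rw [this, Nat.testBit_two_pow_add_eq,
        Nat.testBit_eq_false_of_lt (by
          have := Nat.pow_succ 2 b; omega)]
      rfl
  rw [h]
  have h3 : (range (2 ^ (b+1))).filter (fun r => 2 ^ b ≤ r) = Finset.Ico (2^b) (2^(b+1)) := by
    ext r; simp [Finset.mem_Ico, and_comm]
  rw [h3, Nat.card_Ico]
  have := Nat.pow_succ 2 b; omega

lemma count_bit (a b : ℕ) (h : b < a) :
    ((range (2 ^ a)).filter (fun r => Nat.testBit r b = true)).card = 2 ^ (a-1) := by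
  have h1 : (2:ℕ) ^ a = 2 ^ (a - b - 1) * 2 ^ (b+1) := by
    rw [← pow_add]; congr 1; omega
  have h2 : ((range (2 ^ a)).filter (fun r => Nat.testBit r b = true))
      = ((range (2 ^ (a - b - 1) * 2 ^ (b+1))).filter
          (fun j => (Nat.testBit (j % 2 ^ (b+1)) b = true))) := by
    rw [← h1]
    apply Finset.filter_congr
    intro r _
    simp [Nat.testBit_mod_two_pow]
  rw [h2, count_period (2^(b+1)) (2^(a-b-1)) (fun r => Nat.testBit r b = true),
    count_bit_base, ← pow_add]
  congr 1; omega

lemma count_fin (N : ℕ) (p : ℕ → Prop) [DecidablePred p] :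
    (Finset.univ.filter (fun j : Fin N => p (j : ℕ))).card = ((range N).filter p).card := by
  rw [Finset.card_filter, Finset.card_filter]
  exact Fin.sum_univ_eq_sum_range (fun j => if p j then 1 else 0) N


lemma deriv_g {y : ℝ} (h1p : (0:ℝ) < 1 + y) (h1m : (0:ℝ) < 1 - y) :
    HasDerivAt (fun z : ℝ => Real.log (1+z) - Real.log (1-z) - 2*z)
      (1/(1+y) + 1/(1-y) - 2) y := by
  have d0 : HasDerivAt (fun z : ℝ => 1 + z) 1 y := by
    simpa using (hasDerivAt_id y).const_add 1
  have d0' : HasDerivAt (fun z : ℝ => 1 - z) (-1) y := by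
    exact (hasDerivAt_id y).const_sub 1
  have d1 : HasDerivAt (fun z : ℝ => Real.log (1+z)) (1/(1+y)) y := by
    simpa using d0.log h1p.ne'
  have d2 : HasDerivAt (fun z : ℝ => Real.log (1-z)) (-(1/(1-y))) y := by
    have := d0'.log h1m.ne'
    simpa [neg_div] using this
  have d3 : HasDerivAt (fun z : ℝ => 2*z) 2 y := by
    simpa using (hasDerivAt_id y).const_mul 2
  refine ((d1.sub d2).sub d3).congr_deriv ?_
  ring

lemma deriv_f {y : ℝ} (h1p : (0:ℝ) < 1 + y) (h1m : (0:ℝ) < 1 - y) :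
    HasDerivAt (fun z : ℝ => (1+z) * Real.log (1+z) + (1-z) * Real.log (1-z) - z^2)
      (Real.log (1+y) - Real.log (1-y) - 2*y) y := by
  have d0 : HasDerivAt (fun z : ℝ => 1 + z) 1 y := by
    simpa using (hasDerivAt_id y).const_add 1
  have d0' : HasDerivAt (fun z : ℝ => 1 - z) (-1) y := by
    exact (hasDerivAt_id y).const_sub 1
  have d1 : HasDerivAt (fun z : ℝ => Real.log (1+z)) (1/(1+y)) y := by
    simpa using d0.log h1p.ne'
  have d2 : HasDerivAt (fun z : ℝ => Real.log (1-z)) (-(1/(1-y))) y := by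
    have := d0'.log h1m.ne'
    simpa [neg_div] using this
  have d4 : HasDerivAt (fun z : ℝ => z^2) (2*y) y := by
    simpa using hasDerivAt_pow 2 y
  have d5 := (d0.mul d1).add (d0'.mul d2)
  refine (d5.sub d4).congr_deriv ?_
  field_simp
  ring

lemma Gkey {x : ℝ} (hx0 : 0 < x) (hx : x ≤ 1/2) :
    x^2 < (1+x) * Real.log (1+x) + (1-x) * Real.log (1-x) := by
  have hbd : ∀ y ∈ Set.Icc (0:ℝ) (1/2), (0:ℝ) < 1 + y ∧ (0:ℝ) < 1 - y := by
    rintro y ⟨h0, h1⟩; constructor <;> linarith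
  -- g is strictly monotone on [0,1/2]
  have hgmono : StrictMonoOn (fun z : ℝ => Real.log (1+z) - Real.log (1-z) - 2*z)
      (Set.Icc (0:ℝ) (1/2)) := by
    apply strictMonoOn_of_deriv_pos (convex_Icc _ _)
    · intro y hy
      exact (deriv_g (hbd y hy).1 (hbd y hy).2).continuousAt.continuousWithinAt
    · intro y hy
      rw [interior_Icc] at hy
      obtain ⟨hy0, hy1⟩ := hy
      have h1p : (0:ℝ) < 1 + y := by linarith
      have h1m : (0:ℝ) < 1 - y := by linarith
      rw [(deriv_g h1p h1m).deriv]
      have key : (1/(1+y) + 1/(1-y) - 2) * ((1+y)*(1-y)) = 2*y^2 := by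
        field_simp; ring
      nlinarith [mul_pos h1p h1m, mul_pos hy0 hy0]
  have hgpos : ∀ y ∈ Set.Ioc (0:ℝ) (1/2),
      (0:ℝ) < Real.log (1+y) - Real.log (1-y) - 2*y := by
    rintro y ⟨hy0, hy1⟩
    have := hgmono (Set.mem_Icc.mpr ⟨le_refl 0, by norm_num⟩)
      (Set.mem_Icc.mpr ⟨hy0.le, hy1⟩) hy0
    simpa using this
  have hfmono : StrictMonoOn
      (fun z : ℝ => (1+z) * Real.log (1+z) + (1-z) * Real.log (1-z) - z^2)
      (Set.Icc (0:ℝ) (1/2)) := by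
    apply strictMonoOn_of_deriv_pos (convex_Icc _ _)
    · intro y hy
      exact (deriv_f (hbd y hy).1 (hbd y hy).2).continuousAt.continuousWithinAt
    · intro y hy
      rw [interior_Icc] at hy
      obtain ⟨hy0, hy1⟩ := hy
      rw [(deriv_f (by linarith) (by linarith : (0:ℝ) < 1 - y)).deriv]
      exact hgpos y ⟨hy0, hy1.le⟩
  have := hfmono (Set.mem_Icc.mpr ⟨le_refl 0, by norm_num⟩)
    (Set.mem_Icc.mpr ⟨hx0.le, hx⟩) hx0
  simp only [add_zero, sub_zero, Real.log_one, mul_zero, zero_pow] at this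
  nlinarith [this]

lemma colVal_low {m j : ℕ} (hj : j < 2 ^ (m+5)) :
    colVal (m+6) j = 2 ^ (m+5) + j := by
  have h6 : (2:ℕ)^(m+6) = 2 * 2^(m+5) := by rw [pow_succ]; ring
  have hv1 : 2 ^ (m+5) ≤ 2 ^ (m+6) - 1 - j := by omega
  have hv2 : 2 ^ (m+6) - 1 - j < 2 ^ (m+6) := by
    have : (0:ℕ) < 2^(m+5) := Nat.pow_pos (by norm_num)
    omega
  have hlog : Nat.log2 (2 ^ (m+6) - 1 - j) = m+5 := by
    have hne : 2 ^ (m+6) - 1 - j ≠ 0 := by omega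
    have hle := (Nat.le_log2 hne).mpr hv1
    have hlt := (Nat.log2_lt hne).mpr hv2
    omega
  rw [colVal, hlog]
  omega

lemma colVal_high {m j : ℕ} (h1 : 2 ^ (m+5) ≤ j) (h2 : j < 2 ^ (m+5) + 2 ^ (m+3)) :
    colVal (m+6) j = 2 ^ (m+4) + (j - 2 ^ (m+5)) := by
  have e3 : (2:ℕ)^(m+4) = 2 * 2^(m+3) := by rw [pow_succ]; ring
  have e4 : (2:ℕ)^(m+5) = 2 * 2^(m+4) := by rw [pow_succ]; ring
  have e5 : (2:ℕ)^(m+6) = 2 * 2^(m+5) := by rw [pow_succ]; ring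
  have hp : (0:ℕ) < 2^(m+3) := Nat.pow_pos (by norm_num)
  have hv1 : 2 ^ (m+4) ≤ 2 ^ (m+6) - 1 - j := by omega
  have hv2 : 2 ^ (m+6) - 1 - j < 2 ^ (m+5) := by omega
  have hlog : Nat.log2 (2 ^ (m+6) - 1 - j) = m+4 := by
    have hne : 2 ^ (m+6) - 1 - j ≠ 0 := by omega
    have hle := (Nat.le_log2 hne).mpr hv1
    have hlt := (Nat.log2_lt hne).mpr hv2
    omega
  rw [colVal, hlog]
  omega

lemma gcolVal_eval {m t : ℕ} (ht : 1 ≤ t) {j : ℕ} (hj : j < 2 ^ (m+3) * (4*t+1)) :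
    gcolVal (m+6) (2 ^ (m+3) * (4*t+1)) j =
      if j < t * 2 ^ (m+5) then 2 ^ (m+5) + j % 2 ^ (m+5)
      else 2 ^ (m+4) + (j - t * 2 ^ (m+5)) := by
  have e5 : (2:ℕ)^(m+5) = 4 * 2^(m+3) := by rw [pow_succ, pow_succ]; ring
  have hp : (0:ℕ) < 2^(m+3) := Nat.pow_pos (by norm_num)
  have hp5 : (0:ℕ) < 2^(m+5) := by omega
  have hN : 2 ^ (m+3) * (4*t+1) = t * 2 ^ (m+5) + 2 ^ (m+3) := by
    rw [e5]; ring
  have hdiv : (2 ^ (m+3) * (4*t+1) - 2 ^ ((m+6) - 1)) / 2 ^ ((m+6) - 1) = t - 1 := by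
    have h1 : (m+6) - 1 = m + 5 := by omega
    rw [h1]
    have h2 : 2 ^ (m+3) * (4*t+1) - 2 ^ (m+5) = (t-1) * 2 ^ (m+5) + 2 ^ (m+3) := by
      rw [hN]; cases t with
      | zero => omega
      | succ t' => simp [Nat.succ_sub_one]; ring_nf; omega
    rw [h2, Nat.add_comm, Nat.add_mul_div_right _ _ hp5, Nat.div_eq_of_lt (by omega)]
    omega
  rw [gcolVal, hdiv]
  have h1 : (m+6) - 1 = m + 5 := by omega
  rw [h1]
  by_cases hc : j < (t-1) * 2 ^ (m+5)
  · rw [if_pos hc, if_pos (by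
      have : (t-1) * 2^(m+5) ≤ t * 2^(m+5) := Nat.mul_le_mul_right _ (by omega)
      omega)]
  · rw [if_neg hc]
    have hj' : j - (t-1) * 2 ^ (m+5) < 2 ^ (m+5) + 2 ^ (m+3) := by
      have : (t-1) * 2^(m+5) + 2^(m+5) = t * 2^(m+5) := by
        cases t with
        | zero => omega
        | succ t' => simp [Nat.succ_sub_one]; ring
      omega
    by_cases hc2 : j < t * 2 ^ (m+5)
    · rw [if_pos hc2]
      have hlt : j - (t-1) * 2 ^ (m+5) < 2 ^ (m+5) := by
        have : (t-1) * 2^(m+5) + 2^(m+5) = t * 2^(m+5) := by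
          cases t with
          | zero => omega
          | succ t' => simp [Nat.succ_sub_one]; ring
        omega
      rw [colVal_low hlt]
      congr 1
      -- j % 2^(m+5) = j - (t-1)*2^(m+5)
      have : j = (j - (t-1) * 2^(m+5)) + (t-1) * 2^(m+5) := by omega
      have hmod : j % 2 ^ (m+5) = j - (t-1) * 2^(m+5) := by
        conv_lhs => rw [this]
        rw [Nat.add_mul_mod_self_right, Nat.mod_eq_of_lt hlt]
      omega
    · rw [if_neg hc2]
      have hge : 2 ^ (m+5) ≤ j - (t-1) * 2 ^ (m+5) := by
        have : (t-1) * 2^(m+5) + 2^(m+5) = t * 2^(m+5) := by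
          cases t with
          | zero => omega
          | succ t' => simp [Nat.succ_sub_one]; ring
        omega
      rw [colVal_high hge hj']
      congr 1
      have : (t-1) * 2^(m+5) + 2^(m+5) = t * 2^(m+5) := by
        cases t with
        | zero => omega
        | succ t' => simp [Nat.succ_sub_one]; ring
      omega

lemma wt_filter1 (m t : ℕ) (ht : 1 ≤ t) :
    ((Finset.range (2^(m+3)*(4*t+1))).filter
      (fun j => Nat.testBit (gcolVal (m+6) (2^(m+3)*(4*t+1)) j) (m+3) = true)).card
    = t * 2^(m+4) := by
  have e5 : (2:ℕ)^(m+5) = 4 * 2^(m+3) := by rw [pow_succ, pow_succ]; ring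
  have hp : (0:ℕ) < 2^(m+3) := Nat.pow_pos (by norm_num)
  have hN : 2^(m+3)*(4*t+1) = t * 2^(m+5) + 2^(m+3) := by rw [e5]; ring
  have hset : ((Finset.range (2^(m+3)*(4*t+1))).filter
      (fun j => Nat.testBit (gcolVal (m+6) (2^(m+3)*(4*t+1)) j) (m+3) = true))
      = (Finset.range (t * 2^(m+5))).filter
          (fun j => Nat.testBit (j % 2^(m+5)) (m+3) = true) := by
    ext j
    simp only [Finset.mem_filter, Finset.mem_range]
    constructor
    · rintro ⟨hj, hbit⟩
      rw [gcolVal_eval ht hj] at hbit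
      by_cases hc : j < t * 2^(m+5)
      · rw [if_pos hc, Nat.testBit_two_pow_add_gt (by omega)] at hbit
        exact ⟨hc, hbit⟩
      · rw [if_neg hc, Nat.testBit_two_pow_add_gt (by omega),
          Nat.testBit_eq_false_of_lt (by omega)] at hbit
        exact absurd hbit (by simp)
    · rintro ⟨hj, hbit⟩
      have hjN : j < 2^(m+3)*(4*t+1) := by omega
      refine ⟨hjN, ?_⟩
      rw [gcolVal_eval ht hjN, if_pos hj, Nat.testBit_two_pow_add_gt (by omega)]
      exact hbit
  rw [hset, count_period (2^(m+5)) t (fun r => Nat.testBit r (m+3) = true),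
    count_bit (m+5) (m+3) (by omega)]
  have h4 : m+5-1 = m+4 := by omega
  rw [h4]

lemma wt_filter2 (m t : ℕ) (ht : 1 ≤ t) :
    ((Finset.range (2^(m+3)*(4*t+1))).filter
      (fun j => ¬ (Nat.testBit (gcolVal (m+6) (2^(m+3)*(4*t+1)) j) (m+5)
          = Nat.testBit (gcolVal (m+6) (2^(m+3)*(4*t+1)) j) (m+3)))).card
    = t * 2^(m+4) := by
  have e5 : (2:ℕ)^(m+5) = 4 * 2^(m+3) := by rw [pow_succ, pow_succ]; ring
  have e45 : (2:ℕ)^(m+5) = 2 * 2^(m+4) := by rw [pow_succ]; ring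
  have e34 : (2:ℕ)^(m+4) = 2 * 2^(m+3) := by rw [pow_succ]; ring
  have hp : (0:ℕ) < 2^(m+3) := Nat.pow_pos (by norm_num)
  have hp5 : (0:ℕ) < 2^(m+5) := by omega
  have hN : 2^(m+3)*(4*t+1) = t * 2^(m+5) + 2^(m+3) := by rw [e5]; ring
  have hset : ((Finset.range (2^(m+3)*(4*t+1))).filter
      (fun j => ¬ (Nat.testBit (gcolVal (m+6) (2^(m+3)*(4*t+1)) j) (m+5)
          = Nat.testBit (gcolVal (m+6) (2^(m+3)*(4*t+1)) j) (m+3))))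
      = (Finset.range (t * 2^(m+5))).filter
          (fun j => ¬ (Nat.testBit (j % 2^(m+5)) (m+3) = true)) := by
    ext j
    simp only [Finset.mem_filter, Finset.mem_range]
    constructor
    · rintro ⟨hj, hbit⟩
      rw [gcolVal_eval ht hj] at hbit
      by_cases hc : j < t * 2^(m+5)
      · refine ⟨hc, ?_⟩
        rw [if_pos hc] at hbit
        have hr : j % 2^(m+5) < 2^(m+5) := Nat.mod_lt _ hp5
        rw [Nat.testBit_two_pow_add_eq, Nat.testBit_eq_false_of_lt hr,
          Nat.testBit_two_pow_add_gt (by omega)] at hbit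
        intro hcontra
        rw [hcontra] at hbit
        exact hbit rfl
      · exfalso
        rw [if_neg hc] at hbit
        have hr' : j - t * 2^(m+5) < 2^(m+3) := by omega
        rw [Nat.testBit_eq_false_of_lt (by omega : 2^(m+4) + (j - t * 2^(m+5)) < 2^(m+5)),
          Nat.testBit_two_pow_add_gt (by omega),
          Nat.testBit_eq_false_of_lt hr'] at hbit
        exact hbit rfl
    · rintro ⟨hj, hbit⟩
      have hjN : j < 2^(m+3)*(4*t+1) := by omega
      refine ⟨hjN, ?_⟩
      rw [gcolVal_eval ht hjN, if_pos hj]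
      have hr : j % 2^(m+5) < 2^(m+5) := Nat.mod_lt _ hp5
      rw [Nat.testBit_two_pow_add_eq, Nat.testBit_eq_false_of_lt hr,
        Nat.testBit_two_pow_add_gt (by omega)]
      intro hcontra
      exact hbit hcontra.symm
  rw [hset, count_period (2^(m+5)) t (fun r => ¬ (Nat.testBit r (m+3) = true))]
  have hcompl := Finset.card_filter_add_card_filter_not
    (s := Finset.range (2^(m+5))) (p := fun r => Nat.testBit r (m+3) = true)
  rw [count_bit (m+5) (m+3) (by omega), Finset.card_range] at hcompl
  have h4 : m+5-1 = m+4 := by omega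
  rw [h4] at hcompl
  have : ((Finset.range (2^(m+5))).filter (fun r => ¬ (Nat.testBit r (m+3) = true))).card
      = 2^(m+4) := by omega
  rw [this]

set_option maxHeartbeats 2000000 in
/-- For `k ≥ 6` and `1 ≤ t ≤ 2^(k-6)/((k-1) ln 2) - 1/4`, the
generalized code `S_{n,k}` with `n = 2^(k-3)·(4t+1)` is ugly (hence not proper). -/

theorem stmt18 (k t : ℕ) (hk : 6 ≤ k) (ht1 : 1 ≤ t)
    (ht2 : (t : ℝ) ≤ (2 : ℝ) ^ (k - 6) / (((k : ℝ) - 1) * Real.log 2) - 1 / 4) :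
    ¬ IsSatisfactory k (GSCode k (2 ^ (k - 3) * (4 * t + 1))) ∧
    ¬ IsProper (GSCode k (2 ^ (k - 3) * (4 * t + 1))) := by
  classical
  obtain ⟨m, rfl⟩ : ∃ m, k = m + 6 := ⟨k - 6, by omega⟩
  rw [show m + 6 - 3 = m + 3 from by omega]
  rw [show m + 6 - 6 = m from by omega] at ht2
  have ht2' : (t:ℝ) ≤ (2:ℝ)^m / (((m:ℝ)+5) * Real.log 2) - 1/4 := by
    rw [show ((m:ℝ)+5) = ((m+6:ℕ):ℝ) - 1 from by push_cast; ring]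
    exact ht2
  set N := 2 ^ (m+3) * (4*t+1) with hNdef
  set C := GSCode (m+6) N with hC
  set w := t * 2^(m+4) with hwdef
  -- natural number facts
  have e34 : (2:ℕ)^(m+4) = 2 * 2^(m+3) := by rw [pow_succ]; ring
  have e45 : (2:ℕ)^(m+5) = 2 * 2^(m+4) := by rw [pow_succ]; ring
  have hp3 : (0:ℕ) < 2^(m+3) := Nat.pow_pos (by norm_num)
  have hp4 : (0:ℕ) < 2^(m+4) := by omega
  have hNsplit : N = t * 2^(m+5) + 2^(m+3) := by
    rw [hNdef, show (2:ℕ)^(m+5) = 4*2^(m+3) from by rw [pow_succ, pow_succ]; ring]; ring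
  have hb1 : t * 2^(m+5) = 2 * w := by rw [hwdef, e45]; ring
  have hwN : w ≤ N := by omega
  have hNw : N - w = 2^(m+3)*(2*t+1) := by
    have h2 : 2^(m+3)*(2*t+1) + w = N := by rw [hwdef, hNdef, e34]; ring
    omega
  have hw1 : 1 ≤ w := by
    rw [hwdef]; exact Nat.mul_pos (by omega) hp4
  have hNpos : 0 < N := by omega
  -- the two codewords
  set c1 : Fin N → ZMod 2 :=
    (fun j => if Nat.testBit (gcolVal (m+6) N (j:ℕ)) (m+3) then (1:ZMod 2) else 0) with hc1
  set c2 : Fin N → ZMod 2 :=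
    (fun j => (if Nat.testBit (gcolVal (m+6) N (j:ℕ)) (m+5) then (1:ZMod 2) else 0)
      + (if Nat.testBit (gcolVal (m+6) N (j:ℕ)) (m+3) then (1:ZMod 2) else 0)) with hc2
  have hrow : ∀ i : Fin (m+6),
      (fun j : Fin N => if Nat.testBit (gcolVal (m+6) N (j:ℕ)) ((m+6) - ((i:ℕ)+1))
        then (1:ZMod 2) else 0) ∈ C := by
    intro i
    exact Submodule.subset_span (Set.mem_range_self i)
  have hmem1 : c1 ∈ C := by
    have h := hrow ⟨2, by omega⟩
    have hidx : (m+6) - (((⟨2, by omega⟩ : Fin (m+6)):ℕ)+1) = m+3 := by simp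
    rw [hidx] at h
    exact h
  have hmem2 : c2 ∈ C := by
    have h0 := hrow ⟨0, by omega⟩
    have h2 := hrow ⟨2, by omega⟩
    have hidx0 : (m+6) - (((⟨0, by omega⟩ : Fin (m+6)):ℕ)+1) = m+5 := by simp
    have hidx2 : (m+6) - (((⟨2, by omega⟩ : Fin (m+6)):ℕ)+1) = m+3 := by simp
    rw [hidx0] at h0
    rw [hidx2] at h2
    exact Submodule.add_mem _ h0 h2
  -- weights
  have hwt1 : hammingNorm c1 = w := by
    have h0 : hammingNorm c1 = (Finset.univ.filter (fun j : Fin N => c1 j ≠ 0)).card := rfl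
    have h1 : (Finset.univ.filter (fun j : Fin N => c1 j ≠ 0))
        = (Finset.univ.filter (fun j : Fin N =>
            Nat.testBit (gcolVal (m+6) N ((j:Fin N):ℕ)) (m+3) = true)) := by
      apply Finset.filter_congr
      intro j _
      rw [hc1]
      by_cases hb : Nat.testBit (gcolVal (m+6) N (j:ℕ)) (m+3) <;> simp [hb]
    rw [h0, h1, count_fin N (fun j => Nat.testBit (gcolVal (m+6) N j) (m+3) = true), hNdef,
      wt_filter1 m t ht1, hwdef]
  have hwt2 : hammingNorm c2 = w := by
    have h0 : hammingNorm c2 = (Finset.univ.filter (fun j : Fin N => c2 j ≠ 0)).card := rfl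
    have h1 : (Finset.univ.filter (fun j : Fin N => c2 j ≠ 0))
        = (Finset.univ.filter (fun j : Fin N =>
            ¬ (Nat.testBit (gcolVal (m+6) N ((j:Fin N):ℕ)) (m+5)
              = Nat.testBit (gcolVal (m+6) N ((j:Fin N):ℕ)) (m+3)))) := by
      apply Finset.filter_congr
      intro j _
      rw [hc2]
      rcases hb5 : Nat.testBit (gcolVal (m+6) N (j:ℕ)) (m+5) <;>
        rcases hb3 : Nat.testBit (gcolVal (m+6) N (j:ℕ)) (m+3) <;>
          simp [hb5, hb3] <;> decide
    rw [h0, h1, count_fin N (fun j => ¬ (Nat.testBit (gcolVal (m+6) N j) (m+5)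
          = Nat.testBit (gcolVal (m+6) N j) (m+3))), hNdef,
      wt_filter2 m t ht1, hwdef]
  -- the codewords are distinct
  have hne : c1 ≠ c2 := by
    intro h
    have hval : gcolVal (m+6) N 0 = 2^(m+5) := by
      rw [hNdef, gcolVal_eval ht1 (by rw [← hNdef]; omega)]
      rw [if_pos (by omega)]
      simp
    have heval := congrFun h (⟨0, hNpos⟩ : Fin N)
    rw [hc1, hc2] at heval
    simp only [Fin.val_mk] at heval
    rw [hval, Nat.testBit_two_pow_of_ne (by omega), Nat.testBit_two_pow_self] at heval
    simp at heval
  -- A_w ≥ 2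
  have hnum : 2 ≤ numWt C w := by
    have hsub : ({c1, c2} : Set (Fin N → ZMod 2)) ⊆ {c | c ∈ C ∧ hammingNorm c = w} := by
      rintro c (rfl | rfl)
      · exact ⟨hmem1, hwt1⟩
      · exact ⟨hmem2, hwt2⟩
    calc (2:ℕ) = ({c1, c2} : Set (Fin N → ZMod 2)).ncard := (Set.ncard_pair hne).symm
      _ ≤ _ := Set.ncard_le_ncard hsub (Set.toFinite _)
  -- real setup
  have hlog2 : (0:ℝ) < Real.log 2 := Real.log_pos (by norm_num)
  have htR : (1:ℝ) ≤ (t:ℝ) := by exact_mod_cast ht1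
  set sr : ℝ := 4*(t:ℝ)+1 with hsr
  have hsrpos : (0:ℝ) < sr := by rw [hsr]; linarith
  set x : ℝ := 1/sr with hx
  have hx0 : 0 < x := by rw [hx]; positivity
  have hxle : x ≤ 1/2 := by
    rw [hx]
    rw [show (1:ℝ)/2 = 1/(2:ℝ) from rfl]
    apply one_div_le_one_div_of_le (by norm_num)
    rw [hsr]; linarith
  set p0 : ℝ := (1-x)/2 with hp0
  have hq0 : 1 - p0 = (1+x)/2 := by rw [hp0]; ring
  have hxlt1 : x < 1 := by linarith
  have hp0pos : 0 < p0 := by rw [hp0]; linarith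
  have hp0le : p0 ≤ 1/2 := by rw [hp0]; linarith
  have hqpos : 0 < 1 - p0 := by rw [hq0]; linarith
  -- cast identities
  have hsrx : sr * x = 1 := by rw [hx]; field_simp
  have hwR : (w:ℝ) = 2^(m+2)*(sr*(1-x)) := by
    have h1 : sr * (1-x) = 4*(t:ℝ) := by rw [mul_sub, hsrx, hsr]; ring
    rw [h1, hwdef]
    push_cast
    rw [show ((2:ℝ))^(m+4) = 2^(m+2)*4 from by rw [pow_succ, pow_succ]; ring]
    ring
  have hBR : ((N - w : ℕ):ℝ) = 2^(m+2)*(sr*(1+x)) := by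
    have h1 : sr * (1+x) = 4*(t:ℝ)+2 := by rw [mul_add, hsrx, hsr]; ring
    rw [h1, hNw]
    push_cast
    rw [show ((2:ℝ))^(m+3) = 2^(m+2)*2 from by rw [pow_succ]]
    ring
  have hsum : (w:ℝ) + ((N-w:ℕ):ℝ) = (N:ℝ) := by
    have h1 : w + (N - w) = N := by omega
    exact_mod_cast congrArg (Nat.cast : ℕ → ℝ) h1
  -- the numeric hypothesis
  have hden : (0:ℝ) < ((m:ℝ)+5)*Real.log 2 := by positivity
  have hstep : ((t:ℝ)+1/4)*(((m:ℝ)+5)*Real.log 2) ≤ 2^m := by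
    have h2 : (t:ℝ)+1/4 ≤ (2:ℝ)^m/(((m:ℝ)+5)*Real.log 2) := by linarith
    calc ((t:ℝ)+1/4)*(((m:ℝ)+5)*Real.log 2)
        ≤ ((2:ℝ)^m/(((m:ℝ)+5)*Real.log 2))*(((m:ℝ)+5)*Real.log 2) :=
          mul_le_mul_of_nonneg_right h2 hden.le
      _ = 2^m := by field_simp
  have hfin : ((m:ℝ)+5)*Real.log 2 ≤ 2^(m+2)*x := by
    rw [hx, mul_one_div, le_div_iff₀ hsrpos]
    have h4 : (2:ℝ)^(m+2) = 4*2^m := by rw [pow_succ, pow_succ]; ring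
    rw [h4, hsr]
    linarith [hstep]
  -- the key strict inequality
  have hkey : (2:ℝ)^(((m+6:ℕ):ℤ) - (N:ℤ)) < 2 * p0^w * (1-p0)^(N-w) := by
    have hLpos : (0:ℝ) < 2 * p0^w * (1-p0)^(N-w) := by positivity
    have hR : (2:ℝ)^(((m+6:ℕ):ℤ) - (N:ℤ))
        = Real.exp ((((m+6:ℕ):ℝ) - (N:ℝ)) * Real.log 2) := by
      rw [← Real.rpow_intCast 2 (((m+6:ℕ):ℤ) - (N:ℤ)), Real.rpow_def_of_pos (by norm_num)]
      push_cast
      ring_nf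
    rw [hR, ← Real.exp_log hLpos]
    apply Real.exp_lt_exp.mpr
    rw [Real.log_mul (by positivity) (by positivity), Real.log_mul (by norm_num) (by positivity),
      Real.log_pow, Real.log_pow]
    have hlp : Real.log p0 = Real.log (1-x) - Real.log 2 := by
      rw [hp0, Real.log_div (by linarith) (by norm_num)]
    have hlq : Real.log (1-p0) = Real.log (1+x) - Real.log 2 := by
      rw [hq0, Real.log_div (by linarith) (by norm_num)]
    rw [hlp, hlq]
    have hG := Gkey hx0 hxle
    have hmain : 2^(m+2)*sr*(x^2)
        < 2^(m+2)*sr*((1+x)*Real.log (1+x) + (1-x)*Real.log (1-x)) :=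
      mul_lt_mul_of_pos_left hG (by positivity)
    have hxx : 2^(m+2)*sr*(x^2) = 2^(m+2)*x := by
      rw [hx]; field_simp
    have hkey2 : ((m:ℝ)+5)*Real.log 2
        < (w:ℝ)*Real.log (1-x) + ((N-w:ℕ):ℝ)*Real.log (1+x) := by
      calc ((m:ℝ)+5)*Real.log 2 ≤ 2^(m+2)*x := hfin
        _ = 2^(m+2)*sr*(x^2) := hxx.symm
        _ < 2^(m+2)*sr*((1+x)*Real.log (1+x) + (1-x)*Real.log (1-x)) := hmain
        _ = (2^(m+2)*(sr*(1-x)))*Real.log (1-x)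
            + (2^(m+2)*(sr*(1+x)))*Real.log (1+x) := by ring
        _ = (w:ℝ)*Real.log (1-x) + ((N-w:ℕ):ℝ)*Real.log (1+x) := by rw [hwR, hBR]
    have hNL : (w:ℝ)*Real.log 2 + ((N-w:ℕ):ℝ)*Real.log 2 = (N:ℝ)*Real.log 2 := by
      rw [← add_mul, hsum]
    have hc6 : ((m+6:ℕ):ℝ) = (m:ℝ)+6 := by push_cast; ring
    rw [hc6]
    linarith [hkey2, hNL]
  -- lower bound on Pue at p0
  have hPge : 2 * p0^w * (1-p0)^(N-w) ≤ Pue C p0 := by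
    unfold Pue
    have hmem : w ∈ Finset.Icc 1 N := Finset.mem_Icc.mpr ⟨hw1, hwN⟩
    have hterm : ∀ i ∈ Finset.Icc 1 N,
        (0:ℝ) ≤ (numWt C i : ℝ) * p0 ^ i * (1 - p0) ^ (N - i) := by
      intro i _
      have : (0:ℝ) ≤ (numWt C i : ℝ) := Nat.cast_nonneg _
      positivity
    have h1 := Finset.single_le_sum hterm hmem
    have h2 : 2 * p0^w * (1-p0)^(N-w) ≤ (numWt C w : ℝ) * p0 ^ w * (1 - p0) ^ (N - w) := by
      have hcast : (2:ℝ) ≤ (numWt C w : ℝ) := by exact_mod_cast hnum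
      have hnn : (0:ℝ) ≤ p0 ^ w * (1-p0)^(N-w) := by positivity
      calc 2 * p0^w * (1-p0)^(N-w) = 2 * (p0^w * (1-p0)^(N-w)) := by ring
        _ ≤ (numWt C w : ℝ) * (p0^w * (1-p0)^(N-w)) := mul_le_mul_of_nonneg_right hcast hnn
        _ = _ := by ring
    linarith
  have hlt : (2:ℝ)^(((m+6:ℕ):ℤ) - (N:ℤ)) < Pue C p0 := lt_of_lt_of_le hkey hPge
  have hp0mem : p0 ∈ Set.Icc (0:ℝ) (1/2) := ⟨hp0pos.le, hp0le⟩
  -- upper bound on Pue at 1/2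
  have hsumA : ∑ i ∈ Finset.Icc 1 N, (numWt C i) ≤ 2^(m+6) := by
    have hnumeq : ∀ i, numWt C i
        = (Finset.univ.filter (fun c : Fin N → ZMod 2 => c ∈ C ∧ hammingNorm c = i)).card := by
      intro i
      unfold numWt
      rw [← Set.ncard_coe_finset]
      congr 1
      ext c
      simp
    calc ∑ i ∈ Finset.Icc 1 N, numWt C i
        = ∑ i ∈ Finset.Icc 1 N, (Finset.univ.filter
            (fun c : Fin N → ZMod 2 => c ∈ C ∧ hammingNorm c = i)).card :=
          Finset.sum_congr rfl (fun i _ => hnumeq i)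
      _ = ((Finset.Icc 1 N).biUnion (fun i => Finset.univ.filter
            (fun c : Fin N → ZMod 2 => c ∈ C ∧ hammingNorm c = i))).card := by
          rw [Finset.card_biUnion]
          intro i _ j _ hij
          simp only [Finset.disjoint_left, Finset.mem_filter, Finset.mem_univ, true_and]
          rintro c ⟨_, hci⟩ ⟨_, hcj⟩
          exact hij (hci ▸ hcj ▸ rfl)
      _ ≤ (Finset.univ.image (fun a : Fin (m+6) → ZMod 2 =>
            ∑ i : Fin (m+6), a i • (fun j : Fin N =>
              if Nat.testBit (gcolVal (m+6) N (j:ℕ)) ((m+6) - ((i:ℕ)+1))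
                then (1:ZMod 2) else 0))).card := by
          apply Finset.card_le_card
          intro c hc
          simp only [Finset.mem_biUnion, Finset.mem_filter, Finset.mem_univ, true_and] at hc
          obtain ⟨i, _, hcC, _⟩ := hc
          rw [hC] at hcC
          rw [GSCode, Submodule.mem_span_range_iff_exists_fun] at hcC
          obtain ⟨a, ha⟩ := hcC
          simp only [Finset.mem_image, Finset.mem_univ, true_and]
          exact ⟨a, ha⟩
      _ ≤ (Finset.univ : Finset (Fin (m+6) → ZMod 2)).card := Finset.card_image_le
      _ = 2^(m+6) := by
          rw [Finset.card_univ, Fintype.card_fun]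
          simp
  have hhalf : Pue C (1/2 : ℝ) ≤ (2:ℝ)^(((m+6:ℕ):ℤ) - (N:ℤ)) := by
    unfold Pue
    have heq : ∀ i ∈ Finset.Icc 1 N,
        (numWt C i : ℝ) * (1/2:ℝ)^i * (1 - 1/2:ℝ)^(N-i)
        = (numWt C i : ℝ) * (1/2:ℝ)^N := by
      intro i hi
      obtain ⟨h1i, hiN⟩ := Finset.mem_Icc.mp hi
      rw [show (1 - 1/2 : ℝ) = 1/2 from by norm_num, mul_assoc, ← pow_add,
        show i + (N-i) = N from by omega]
    rw [Finset.sum_congr rfl heq, ← Finset.sum_mul]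
    have hcast : (∑ i ∈ Finset.Icc 1 N, (numWt C i : ℝ)) ≤ (2:ℝ)^(m+6) := by
      calc (∑ i ∈ Finset.Icc 1 N, (numWt C i : ℝ))
          = ((∑ i ∈ Finset.Icc 1 N, numWt C i : ℕ) : ℝ) := by push_cast; rfl
        _ ≤ ((2^(m+6) : ℕ):ℝ) := by exact_mod_cast hsumA
        _ = (2:ℝ)^(m+6) := by push_cast; rfl
    have hzpow : (2:ℝ)^(((m+6:ℕ):ℤ) - (N:ℤ)) = (2:ℝ)^(m+6) * ((1:ℝ)/2)^N := by
      rw [zpow_sub₀ (by norm_num : (2:ℝ) ≠ 0), zpow_natCast, zpow_natCast,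
        show ((1:ℝ)/2)^N = ((2:ℝ)^N)⁻¹ from by rw [one_div, inv_pow], div_eq_mul_inv]
    rw [hzpow]
    apply mul_le_mul_of_nonneg_right hcast (by positivity)
  refine ⟨?_, ?_⟩
  · intro hsat
    have := hsat p0 hp0mem
    rw [hC] at hlt
    linarith
  · intro hprop
    unfold IsProper at hprop
    have hhalfmem : (1/2:ℝ) ∈ Set.Icc (0:ℝ) (1/2) := ⟨by norm_num, le_refl _⟩
    have hmono := hprop hp0mem hhalfmem hp0le
    rw [hC] at hlt hhalf hmono
    linarith
end
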